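/- arXiv:1506.02829 — 2 statements merged into one kernel-verified Lean document; each statement's English description precedes it below -/
import Mathlib

section
/- The number of plane partitions of k fitting inside a 2 × a rectangle (i.e., plane partitions with at most 2 rows and at most a columns) equals the number of coloured partitions of k with parts in {1, 2, 2̄, 3, 3̄, ..., a, ā, (a+1)} where sizes 2 through a come in two colours each and sizes 1 and a+1 in one colour each. -/
/-- Number of plane partitions of `k` fitting inside a `2 × a` rectangle:
`2 × a` arrays of nonnegative integers, weakly decreasing along rows and
columns, with total sum `k`. -/
noncomputable def planePartitionCount (a k : ℕ) : ℕ :=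
  Nat.card {f : Fin 2 → Fin a → ℕ //
    (∀ i : Fin 2, ∀ j j' : Fin a, j ≤ j' → f i j' ≤ f i j) ∧
    (∀ j : Fin a, f 1 j ≤ f 0 j) ∧
    ∑ i, ∑ j, f i j = k}

/-- Number of coloured partitions of `k` with parts in
`{1, 2, 2̄, …, a, ā, a+1}`: sizes `2,…,a` in two colours, sizes `1` and `a+1`
in one colour each. -/
noncomputable def colouredCount (a k : ℕ) : ℕ :=
  Nat.card {p : (ℕ → ℕ) × (ℕ → ℕ) //
    (∀ j, ¬(1 ≤ j ∧ j ≤ a + 1) → p.1 j = 0) ∧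
    (∀ j, ¬(2 ≤ j ∧ j ≤ a) → p.2 j = 0) ∧
    ∑ j ∈ Finset.range (a + 2), j * (p.1 j + p.2 j) = k}

namespace PPCproof

/-- `imin t d n = min (t, d 0, ..., d (n-1))`. -/
def imin (t : ℕ) (d : ℕ → ℕ) : ℕ → ℕ
  | 0 => t
  | n+1 => min (imin t d n) (d n)

/-- `smin t d b m = min (t, d m, ..., d (b-1))` (equals `t` if `b ≤ m`). -/
def smin (t : ℕ) (d : ℕ → ℕ) (b m : ℕ) : ℕ := imin t (fun i => d (b - 1 - i)) (b - m)

lemma smin_of_le (t : ℕ) (d : ℕ → ℕ) {b m : ℕ} (h : b ≤ m) : smin t d b m = t := by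
  unfold smin
  rw [Nat.sub_eq_zero_of_le h]
  rfl

lemma smin_succ (t : ℕ) (d : ℕ → ℕ) {b m : ℕ} (h : m < b) :
    smin t d b m = min (d m) (smin t d b (m+1)) := by
  unfold smin
  have h1 : b - m = (b - (m+1)) + 1 := by omega
  rw [h1]
  show min (imin t _ (b - (m+1))) (d (b - 1 - (b - (m+1)))) = _
  have h2 : b - 1 - (b - (m+1)) = m := by omega
  rw [h2, min_comm]

lemma smin_le_succ (t : ℕ) (d : ℕ → ℕ) (b m : ℕ) :
    smin t d b m ≤ smin t d b (m+1) := by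
  rcases lt_or_ge m b with h | h
  · rw [smin_succ t d h]; exact min_le_right _ _
  · rw [smin_of_le t d h, smin_of_le t d (by omega)]

lemma smin_mono (t : ℕ) (d : ℕ → ℕ) (b : ℕ) : Monotone (smin t d b) :=
  monotone_nat_of_le_succ (smin_le_succ t d b)

lemma smin_le_t (t : ℕ) (d : ℕ → ℕ) (b m : ℕ) : smin t d b m ≤ t := by
  rcases le_or_gt b m with h | h
  · rw [smin_of_le t d h]
  · calc smin t d b m ≤ smin t d b b := smin_mono t d b h.le
      _ = t := smin_of_le t d le_rfl

lemma smin_le_d (t : ℕ) (d : ℕ → ℕ) {b m j : ℕ} (h1 : m ≤ j) (h2 : j < b) :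
    smin t d b m ≤ d j := by
  calc smin t d b m ≤ smin t d b j := smin_mono t d b h1
    _ ≤ d j := by rw [smin_succ t d h2]; exact min_le_left _ _

/-- Downward induction from `b`. -/
lemma down_ind {b : ℕ} {P : ℕ → Prop} (base : ∀ m, b ≤ m → P m)
    (step : ∀ m, m < b → P (m+1) → P m) : ∀ m, P m := by
  have key : ∀ i m, b - m ≤ i → P m := by
    intro i
    induction i with
    | zero => intro m hm; exact base m (by omega)
    | succ i ih =>
      intro m hm
      rcases le_or_gt b m with hb | hb
      · exact base m hb
      · exact step m hb (ih (m+1) (by omega))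
  intro m; exact key (b - m) m le_rfl
section Step2

variable (a : ℕ) (l u : ℕ → ℕ)

/-- difference row -/
def dfn (l u : ℕ → ℕ) (m : ℕ) : ℕ := l m - u m

/-- capped suffix minimum of the difference row, cap `l a` (the value `t`). -/
def M2 (a : ℕ) (l u : ℕ → ℕ) (m : ℕ) : ℕ := smin (l a) (dfn l u) (a+1) m

def fwdL (a : ℕ) (l u : ℕ → ℕ) (m : ℕ) : ℕ := l m - M2 a l u (m+1)
def fwdU (a : ℕ) (l u : ℕ → ℕ) (m : ℕ) : ℕ := u m - (l a - M2 a l u m)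

/-- capped prefix minimum used in the inverse. -/
def N2 (t : ℕ) (l' u' : ℕ → ℕ) (m : ℕ) : ℕ := imin t (dfn l' u') m

def bwdL (a t : ℕ) (l' u' : ℕ → ℕ) (m : ℕ) : ℕ :=
  if m ≤ a then l' m + (t - N2 t l' u' (m+1)) else 0
def bwdU (a t : ℕ) (l' u' : ℕ → ℕ) (m : ℕ) : ℕ := u' m + N2 t l' u' m

variable (hl : ∀ m, l (m+1) ≤ l m) (hu : ∀ m, u (m+1) ≤ u m)
  (hul : ∀ m, u m ≤ l m) (hl0 : ∀ m, a + 1 ≤ m → l m = 0)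

include hl in
lemma l_anti : ∀ ⦃m n : ℕ⦄, m ≤ n → l n ≤ l m := fun _ _ h =>
  antitone_nat_of_succ_le hl h

lemma M2_of_ge {m : ℕ} (h : a + 1 ≤ m) : M2 a l u m = l a := smin_of_le _ _ h

lemma M2_succ {m : ℕ} (h : m ≤ a) :
    M2 a l u m = min (dfn l u m) (M2 a l u (m+1)) := smin_succ _ _ (by omega)

lemma M2_le_t (m : ℕ) : M2 a l u m ≤ l a := smin_le_t _ _ _ _

lemma M2_le_d {m : ℕ} (h : m ≤ a) : M2 a l u m ≤ dfn l u m :=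
  smin_le_d _ _ le_rfl (by omega)

lemma dfn_add (m : ℕ) (h : u m ≤ l m) : u m + dfn l u m = l m := by
  unfold dfn; omega

include hl hu hul in
lemma s2_uM : ∀ m, l a ≤ u m + M2 a l u m := by
  refine down_ind (b := a+1) (P := fun m => l a ≤ u m + M2 a l u m) ?_ ?_
  · intro m hm
    rw [M2_of_ge a l u hm]
    omega
  · intro m hm ih
    have hM := M2_succ a l u (show m ≤ a by omega)
    have h1 := dfn_add l u m (hul m)
    have h2 : l a ≤ l m := l_anti l hl (by omega)
    have h3 := hu m
    omega

include hl hu hul in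
lemma s2_ua : u a + M2 a l u a = l a := by
  have h1 := s2_uM a l u hl hu hul a
  have h2 := M2_le_d a l u (le_refl a)
  have h3 := dfn_add l u a (hul a)
  omega

include hl in
lemma fwdL_anti (m : ℕ) : fwdL a l u (m+1) ≤ fwdL a l u m := by
  have h1 := hl m
  have h2 : M2 a l u (m+1) ≤ M2 a l u (m+1+1) := smin_le_succ _ _ _ _
  unfold fwdL
  omega

include hl hu hul hl0 in
lemma C2 (m : ℕ) : M2 a l u (m+1) + u (m+1) ≤ M2 a l u m + u m := by
  rcases le_or_gt m a with h | h
  · have hM := M2_succ a l u h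
    have h5 := hu m
    rcases lt_or_ge m a with h' | h'
    · have h1 : M2 a l u (m+1) ≤ dfn l u (m+1) := M2_le_d a l u (by omega)
      have h2 := dfn_add l u (m+1) (hul (m+1))
      have h3 := hl m
      have h4 := dfn_add l u m (hul m)
      omega
    · -- m = a
      have hma : m = a := by omega
      subst hma
      have h1 : M2 m l u (m+1) = l m := M2_of_ge m l u (by omega)
      have h2 : u (m+1) ≤ l (m+1) := hul (m+1)
      have h3 : l (m+1) = 0 := hl0 (m+1) (by omega)
      have h4 := dfn_add l u m (hul m)
      omega
  · rw [M2_of_ge a l u (by omega), M2_of_ge a l u (by omega)]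
    have := hu m
    omega

include hl hu hul hl0 in
lemma fwdU_anti (m : ℕ) : fwdU a l u (m+1) ≤ fwdU a l u m := by
  have h1 := C2 a l u hl hu hul hl0 m
  have h2 := s2_uM a l u hl hu hul m
  have h3 := s2_uM a l u hl hu hul (m+1)
  have h4 := M2_le_t a l u m
  have h5 := M2_le_t a l u (m+1)
  unfold fwdU
  omega

include hl hu hul hl0 in
lemma fwdU_le_fwdL (m : ℕ) : fwdU a l u m ≤ fwdL a l u m := by
  rcases le_or_gt m a with h | h
  · have h1 := M2_le_d a l u h
    have h1' := dfn_add l u m (hul m)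
    have h2 := M2_le_t a l u (m+1)
    have h2' := M2_le_t a l u m
    have h3 : l a ≤ l m := l_anti l hl h
    unfold fwdU fwdL
    omega
  · have h1 : l m = 0 := hl0 m (by omega)
    have h2 : u m ≤ l m := hul m
    unfold fwdU fwdL
    omega

include hl in
lemma fwdL_zero (m : ℕ) (h : a ≤ m) : fwdL a l u m = 0 := by
  have h1 : M2 a l u (m+1) = l a := M2_of_ge a l u (by omega)
  have h2 : l m ≤ l a := l_anti l hl h
  unfold fwdL
  omega

include hl hu hul hl0 in
lemma fwd_weight (hcond : M2 a l u 0 = 0) :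
    (∑ m ∈ Finset.range a, (fwdL a l u m + fwdU a l u m)) + (l a) * (a+2)
      = ∑ m ∈ Finset.range (a+1), (l m + u m) := by
  have key : ∀ m ∈ Finset.range a, fwdL a l u m + fwdU a l u m + (l a + M2 a l u (m+1))
      = (l m + u m) + M2 a l u m := by
    intro m hm'
    have hm : m < a := Finset.mem_range.mp hm'
    have h1 := s2_uM a l u hl hu hul m
    have h2 : M2 a l u m ≤ dfn l u m := M2_le_d a l u (by omega)
    have h2' := dfn_add l u m (hul m)
    have h3 := M2_le_t a l u (m+1)
    have h3' := M2_le_t a l u m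
    have h4 : l a ≤ l m := l_anti l hl (by omega)
    unfold fwdL fwdU
    omega
  have hsum := Finset.sum_congr rfl key
  simp only [Finset.sum_add_distrib, Finset.sum_const, Finset.card_range,
    smul_eq_mul] at hsum ⊢
  have htel : (∑ m ∈ Finset.range a, M2 a l u (m+1)) + M2 a l u 0
      = (∑ m ∈ Finset.range a, M2 a l u m) + M2 a l u a := by
    rw [← Finset.sum_range_succ' (M2 a l u) a, ← Finset.sum_range_succ (M2 a l u) a]
  have hua := s2_ua a l u hl hu hul
  rw [Finset.sum_range_succ, Finset.sum_range_succ]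
  rw [hcond] at htel
  have hexp : l a * (a + 2) = a * l a + 2 * l a := by ring
  rw [hexp]
  omega

end Step2
section Backward

variable (a t : ℕ) (l' u' : ℕ → ℕ)
variable (hl' : ∀ m, l' (m+1) ≤ l' m) (hu' : ∀ m, u' (m+1) ≤ u' m)
  (hul' : ∀ m, u' m ≤ l' m) (hl0' : ∀ m, a ≤ m → l' m = 0)

lemma N2_zero : N2 t l' u' 0 = t := rfl

lemma N2_succ (m : ℕ) : N2 t l' u' (m+1) = min (N2 t l' u' m) (dfn l' u' m) := rfl

lemma N2_le_t (m : ℕ) : N2 t l' u' m ≤ t := by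
  induction m with
  | zero => exact le_rfl
  | succ m ih => rw [N2_succ]; omega

lemma N2_anti (m : ℕ) : N2 t l' u' (m+1) ≤ N2 t l' u' m := by
  rw [N2_succ]; omega

lemma N2_anti' : ∀ ⦃m n : ℕ⦄, m ≤ n → N2 t l' u' n ≤ N2 t l' u' m := fun _ _ h =>
  antitone_nat_of_succ_le (N2_anti t l' u') h

lemma N2_le_d (m : ℕ) : N2 t l' u' (m+1) ≤ dfn l' u' m := by
  rw [N2_succ]; omega

include hul' hl0' in
lemma u0' (m : ℕ) (h : a ≤ m) : u' m = 0 := by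
  have := hul' m; have := hl0' m h; omega

include hul' hl0' in
lemma N2_past (m : ℕ) (h : a + 1 ≤ m) : N2 t l' u' m = 0 := by
  have h1 : N2 t l' u' (a+1) ≤ dfn l' u' a := N2_le_d t l' u' a
  have h2 : dfn l' u' a = 0 := by
    have := hl0' a le_rfl; have := hul' a; unfold dfn; omega
  have h3 : N2 t l' u' m ≤ N2 t l' u' (a+1) := N2_anti' t l' u' h
  omega

include hl' hu' hul' in
lemma bwdL_anti (m : ℕ) : bwdL a t l' u' (m+1) ≤ bwdL a t l' u' m := by
  unfold bwdL
  rcases le_or_gt (m+1) a with h | h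
  · rw [if_pos h, if_pos (by omega : m ≤ a)]
    -- key claim: l' (m+1) + N2 (m+1) ≤ l' m + N2 (m+2)
    have hN2 : N2 t l' u' (m+1+1) = min (N2 t l' u' (m+1)) (dfn l' u' (m+1)) :=
      N2_succ t l' u' (m+1)
    have h1 : N2 t l' u' (m+1) ≤ dfn l' u' m := N2_le_d t l' u' m
    have h2 : u' m + dfn l' u' m = l' m := by have := hul' m; unfold dfn; omega
    have h3 : u' (m+1) + dfn l' u' (m+1) = l' (m+1) := by
      have := hul' (m+1); unfold dfn; omega
    have h4 := hl' m
    have h5 := hu' m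
    have h6 := N2_le_t t l' u' (m+1)
    have h7 := N2_le_t t l' u' (m+1+1)
    omega
  · rw [if_neg (by omega)]
    omega

include hu' in
lemma bwdU_anti (m : ℕ) : bwdU a t l' u' (m+1) ≤ bwdU a t l' u' m := by
  unfold bwdU
  have h1 := N2_anti t l' u' m
  have h2 := hu' m
  omega

include hul' hl0' in
lemma bwdU_le_bwdL (m : ℕ) : bwdU a t l' u' m ≤ bwdL a t l' u' m := by
  unfold bwdU bwdL
  rcases le_or_gt m a with h | h
  · rw [if_pos h]
    have h1 : N2 t l' u' (m+1) ≤ dfn l' u' m := N2_le_d t l' u' m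
    have h2 : u' m + dfn l' u' m = l' m := by have := hul' m; unfold dfn; omega
    have h3 := N2_le_t t l' u' m
    omega
  · rw [if_neg (by omega)]
    have h1 := u0' a l' u' hul' hl0' m (by omega)
    have h2 := N2_past a t l' u' hul' hl0' m (by omega)
    omega

lemma bwdL_zero (m : ℕ) (h : a + 1 ≤ m) : bwdL a t l' u' m = 0 := by
  unfold bwdL
  rw [if_neg (by omega)]

include hul' hl0' in
lemma bwdL_top : bwdL a t l' u' a = t := by
  unfold bwdL
  rw [if_pos le_rfl]
  have h1 := hl0' a le_rfl
  have h2 := N2_past a t l' u' hul' hl0' (a+1) le_rfl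
  omega

include hul' hl0' in
/-- key compatibility: the suffix minima of the reconstructed rows. -/
lemma R2 : ∀ m, M2 a (bwdL a t l' u') (bwdU a t l' u') m = t - N2 t l' u' m := by
  have htop := bwdL_top a t l' u' hul' hl0'
  refine down_ind (b := a+1)
    (P := fun m => M2 a (bwdL a t l' u') (bwdU a t l' u') m = t - N2 t l' u' m) ?_ ?_
  · intro m hm
    rw [M2_of_ge a _ _ hm, htop, N2_past a t l' u' hul' hl0' m hm]
    omega
  · intro m hm ih
    rw [M2_succ a _ _ (by omega)]
    rw [ih]
    have hd : dfn (bwdL a t l' u') (bwdU a t l' u') m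
        = (l' m + (t - N2 t l' u' (m+1))) - (u' m + N2 t l' u' m) := by
      unfold dfn bwdL bwdU
      rw [if_pos (by omega : m ≤ a)]
    have hN2 : N2 t l' u' (m+1) = min (N2 t l' u' m) (dfn l' u' m) := N2_succ t l' u' m
    have h2 : u' m + dfn l' u' m = l' m := by have := hul' m; unfold dfn; omega
    have h3 := N2_le_t t l' u' m
    have h4 := N2_le_t t l' u' (m+1)
    omega

include hul' hl0' in
lemma bwd_cond : M2 a (bwdL a t l' u') (bwdU a t l' u') 0 = 0 := by
  rw [R2 a t l' u' hul' hl0' 0, N2_zero]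
  omega

include hul' hl0' in
lemma bwd_weight :
    ∑ m ∈ Finset.range (a+1), (bwdL a t l' u' m + bwdU a t l' u' m)
      = (∑ m ∈ Finset.range a, (l' m + u' m)) + t * (a+2) := by
  have key : ∀ m ∈ Finset.range a,
      bwdL a t l' u' m + bwdU a t l' u' m + N2 t l' u' (m+1)
        = (l' m + u' m) + t + N2 t l' u' m := by
    intro m hm'
    have hm : m < a := Finset.mem_range.mp hm'
    unfold bwdL bwdU
    rw [if_pos (by omega : m ≤ a)]
    have h1 := N2_le_t t l' u' (m+1)
    omega
  have hsum := Finset.sum_congr rfl key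
  simp only [Finset.sum_add_distrib, Finset.sum_const, Finset.card_range,
    smul_eq_mul] at hsum ⊢
  have htel : (∑ m ∈ Finset.range a, N2 t l' u' (m+1)) + N2 t l' u' 0
      = (∑ m ∈ Finset.range a, N2 t l' u' m) + N2 t l' u' a := by
    rw [← Finset.sum_range_succ' (N2 t l' u') a, ← Finset.sum_range_succ (N2 t l' u') a]
  rw [N2_zero] at htel
  rw [Finset.sum_range_succ, Finset.sum_range_succ]
  have hba := bwdL_top a t l' u' hul' hl0'
  have hbu : bwdU a t l' u' a = N2 t l' u' a := by
    unfold bwdU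
    have := u0' a l' u' hul' hl0' a le_rfl
    omega
  have hNa := N2_le_t t l' u' a
  have hexp : t * (a + 2) = a * t + 2 * t := by ring
  rw [hexp, hba, hbu]
  omega

end Backward

section RoundTrips

variable (a : ℕ) (l u : ℕ → ℕ)
variable (hl : ∀ m, l (m+1) ≤ l m) (hu : ∀ m, u (m+1) ≤ u m)
  (hul : ∀ m, u m ≤ l m) (hl0 : ∀ m, a + 1 ≤ m → l m = 0)

include hl hu hul hl0 in
/-- prefix minima of the image of the forward map. -/
lemma RT1_N (hcond : M2 a l u 0 = 0) :
    ∀ m, N2 (l a) (fwdL a l u) (fwdU a l u) m = l a - M2 a l u m := by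
  intro m
  induction m with
  | zero => rw [N2_zero, hcond]; omega
  | succ m ih =>
    rw [N2_succ, ih]
    have hd : dfn (fwdL a l u) (fwdU a l u) m
        = (l m - M2 a l u (m+1)) - (u m - (l a - M2 a l u m)) := rfl
    rcases le_or_gt m a with h | h
    · have hM : M2 a l u m = min (dfn l u m) (M2 a l u (m+1)) := M2_succ a l u h
      have h1 := M2_le_t a l u m
      have h2 := M2_le_t a l u (m+1)
      have h3 := s2_uM a l u hl hu hul m
      have h4 : u m + dfn l u m = l m := by have := hul m; unfold dfn; omega
      have h5 : l a ≤ l m := l_anti l hl h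
      omega
    · have h1 : M2 a l u m = l a := M2_of_ge a l u (by omega)
      have h2 : M2 a l u (m+1) = l a := M2_of_ge a l u (by omega)
      have h3 : l m = 0 := hl0 m (by omega)
      have h4 : u m ≤ l m := hul m
      omega

include hl hu hul hl0 in
lemma RT1_L (hcond : M2 a l u 0 = 0) (m : ℕ) :
    bwdL a (l a) (fwdL a l u) (fwdU a l u) m = l m := by
  unfold bwdL
  rcases le_or_gt m a with h | h
  · rw [if_pos h, RT1_N a l u hl hu hul hl0 hcond (m+1)]
    have h1 := M2_le_t a l u (m+1)
    have h2 : l a ≤ l m := l_anti l hl h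
    show l m - M2 a l u (m+1) + _ = l m
    omega
  · rw [if_neg (by omega)]
    exact (hl0 m (by omega)).symm

include hl hu hul hl0 in
lemma RT1_U (hcond : M2 a l u 0 = 0) (m : ℕ) :
    bwdU a (l a) (fwdL a l u) (fwdU a l u) m = u m := by
  unfold bwdU
  rw [RT1_N a l u hl hu hul hl0 hcond m]
  have h1 := M2_le_t a l u m
  have h2 := s2_uM a l u hl hu hul m
  show u m - (l a - M2 a l u m) + _ = u m
  omega

end RoundTrips

section RoundTrips2

variable (a t : ℕ) (l' u' : ℕ → ℕ)
variable (hl' : ∀ m, l' (m+1) ≤ l' m) (hu' : ∀ m, u' (m+1) ≤ u' m)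
  (hul' : ∀ m, u' m ≤ l' m) (hl0' : ∀ m, a ≤ m → l' m = 0)

include hul' hl0' in
lemma RT2_L (m : ℕ) : fwdL a (bwdL a t l' u') (bwdU a t l' u') m = l' m := by
  unfold fwdL
  rw [R2 a t l' u' hul' hl0' (m+1)]
  have hb : bwdL a t l' u' m = if m ≤ a then l' m + (t - N2 t l' u' (m+1)) else 0 := rfl
  have h1 := N2_le_t t l' u' (m+1)
  rcases le_or_gt m a with h | h
  · rw [hb, if_pos h]
    omega
  · rw [hb, if_neg (by omega)]
    have := hl0' m (by omega)
    omega

include hul' hl0' in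
lemma RT2_U (m : ℕ) : fwdU a (bwdL a t l' u') (bwdU a t l' u') m = u' m := by
  unfold fwdU
  rw [R2 a t l' u' hul' hl0' m, bwdL_top a t l' u' hul' hl0']
  have h1 := N2_le_t t l' u' m
  show (u' m + N2 t l' u' m) - _ = u' m
  omega

end RoundTrips2
section Step1

variable (a : ℕ) (l u : ℕ → ℕ)

/-- number of size-`(a+1)` hooks to strip. -/
def s1 (a : ℕ) (l u : ℕ → ℕ) : ℕ := M2 a l u 0

def fwd1 (a : ℕ) (l u : ℕ → ℕ) (m : ℕ) : ℕ := l m - s1 a l u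

def bwd1 (a s : ℕ) (l' : ℕ → ℕ) (m : ℕ) : ℕ := if m ≤ a then l' m + s else 0

variable (hl : ∀ m, l (m+1) ≤ l m) (hu : ∀ m, u (m+1) ≤ u m)
  (hul : ∀ m, u m ≤ l m) (hl0 : ∀ m, a + 1 ≤ m → l m = 0)

lemma s1_le_d {m : ℕ} (h : m ≤ a) : s1 a l u ≤ dfn l u m :=
  le_trans (smin_mono _ _ _ (Nat.zero_le m)) (M2_le_d a l u h)

lemma s1_le_t : s1 a l u ≤ l a := M2_le_t a l u 0

include hl in
lemma fwd1_anti (m : ℕ) : fwd1 a l u (m+1) ≤ fwd1 a l u m := by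
  have := hl m; unfold fwd1; omega

include hl hul hl0 in
lemma u_le_fwd1 (m : ℕ) : u m ≤ fwd1 a l u m := by
  unfold fwd1
  rcases le_or_gt m a with h | h
  · have h1 := s1_le_d a l u h
    have h2 : u m + dfn l u m = l m := by have := hul m; unfold dfn; omega
    have h3 : s1 a l u ≤ l a := s1_le_t a l u
    have h4 : l a ≤ l m := l_anti l hl h
    omega
  · have h1 := hul m
    have h2 := hl0 m (by omega)
    omega

include hl0 in
lemma fwd1_zero (m : ℕ) (h : a + 1 ≤ m) : fwd1 a l u m = 0 := by
  have := hl0 m h; unfold fwd1; omega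

/-- subtracting `s` from the top row shifts all capped suffix minima by `s`. -/
lemma M2_sub (s : ℕ) : ∀ m, M2 a (fun m => l m - s) u m = M2 a l u m - s := by
  refine down_ind (b := a+1) (P := fun m => M2 a (fun m => l m - s) u m = M2 a l u m - s) ?_ ?_
  · intro m hm
    rw [M2_of_ge a _ _ hm, M2_of_ge a _ _ hm]
  · intro m hm ih
    rw [M2_succ a _ _ (by omega : m ≤ a), M2_succ a l u (by omega : m ≤ a), ih]
    have hd : dfn (fun m => l m - s) u m = dfn l u m - s := by
      show (l m - s) - u m = (l m - u m) - s
      omega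
    rw [hd]
    omega

lemma fwd1_cond : M2 a (fwd1 a l u) u 0 = 0 := by
  unfold fwd1
  rw [M2_sub a l u (s1 a l u) 0]
  unfold s1
  omega

include hl in
lemma fwd1_weight :
    (∑ m ∈ Finset.range (a+1), (fwd1 a l u m + u m)) + (s1 a l u) * (a+1)
      = ∑ m ∈ Finset.range (a+1), (l m + u m) := by
  have key : ∀ m ∈ Finset.range (a+1), (fwd1 a l u m + u m) + s1 a l u = l m + u m := by
    intro m hm'
    have hm : m < a + 1 := Finset.mem_range.mp hm'
    have h1 : s1 a l u ≤ l a := s1_le_t a l u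
    have h2 : l a ≤ l m := l_anti l hl (by omega)
    unfold fwd1
    omega
  have hsum := Finset.sum_congr rfl key
  simp only [Finset.sum_add_distrib, Finset.sum_const, Finset.card_range,
    smul_eq_mul] at hsum ⊢
  have hexp : s1 a l u * (a+1) = (a+1) * s1 a l u := by ring
  rw [hexp]
  omega

end Step1

section Step1Back

variable (a s : ℕ) (l' u : ℕ → ℕ)
variable (hl' : ∀ m, l' (m+1) ≤ l' m) (hu : ∀ m, u (m+1) ≤ u m)
  (hul' : ∀ m, u m ≤ l' m) (hl0' : ∀ m, a + 1 ≤ m → l' m = 0)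

include hl' in
lemma bwd1_anti (m : ℕ) : bwd1 a s l' (m+1) ≤ bwd1 a s l' m := by
  unfold bwd1
  rcases le_or_gt (m+1) a with h | h
  · rw [if_pos h, if_pos (by omega : m ≤ a)]
    have := hl' m
    omega
  · rw [if_neg (by omega)]
    omega

include hul' in
lemma u_le_bwd1 (hu0 : ∀ m, a + 1 ≤ m → u m = 0) (m : ℕ) : u m ≤ bwd1 a s l' m := by
  unfold bwd1
  rcases le_or_gt m a with h | h
  · rw [if_pos h]; have := hul' m; omega
  · rw [if_neg (by omega)]; have := hu0 m (by omega); omega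

lemma bwd1_zero (m : ℕ) (h : a + 1 ≤ m) : bwd1 a s l' m = 0 := by
  unfold bwd1; rw [if_neg (by omega)]

include hul' in
lemma M2_bwd1 : ∀ m, M2 a (bwd1 a s l') u m = M2 a l' u m + s := by
  refine down_ind (b := a+1) (P := fun m => M2 a (bwd1 a s l') u m = M2 a l' u m + s) ?_ ?_
  · intro m hm
    rw [M2_of_ge a _ _ hm, M2_of_ge a _ _ hm]
    unfold bwd1
    rw [if_pos le_rfl]
  · intro m hm ih
    rw [M2_succ a _ _ (by omega : m ≤ a), M2_succ a l' u (by omega : m ≤ a), ih]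
    have hd : dfn (bwd1 a s l') u m = dfn l' u m + s := by
      unfold dfn bwd1
      rw [if_pos (by omega : m ≤ a)]
      have := hul' m
      omega
    rw [hd]
    omega

include hul' in
lemma bwd1_s (hcond : M2 a l' u 0 = 0) : s1 a (bwd1 a s l') u = s := by
  unfold s1
  rw [M2_bwd1 a s l' u hul' 0, hcond]
  omega

include hul' hl0' in
lemma RT_1b (hcond : M2 a l' u 0 = 0) (m : ℕ) :
    fwd1 a (bwd1 a s l') u m = l' m := by
  unfold fwd1
  rw [bwd1_s a s l' u hul' hcond]
  unfold bwd1
  rcases le_or_gt m a with h | h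
  · rw [if_pos h]; omega
  · rw [if_neg (by omega)]
    have h1 := hl0' m (by omega)
    omega

include hul' in
lemma bwd1_weight :
    ∑ m ∈ Finset.range (a+1), (bwd1 a s l' m + u m)
      = (∑ m ∈ Finset.range (a+1), (l' m + u m)) + s * (a+1) := by
  have key : ∀ m ∈ Finset.range (a+1), bwd1 a s l' m + u m = (l' m + u m) + s := by
    intro m hm'
    have hm : m < a + 1 := Finset.mem_range.mp hm'
    unfold bwd1
    rw [if_pos (by omega : m ≤ a)]
    omega
  have hsum := Finset.sum_congr rfl key
  simp only [Finset.sum_add_distrib, Finset.sum_const, Finset.card_range,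
    smul_eq_mul] at hsum ⊢
  have hexp : s * (a+1) = (a+1) * s := by ring
  rw [hexp]
  omega

end Step1Back

section Step1RT

variable (a : ℕ) (l u : ℕ → ℕ)
variable (hl : ∀ m, l (m+1) ≤ l m) (hul : ∀ m, u m ≤ l m) (hl0 : ∀ m, a + 1 ≤ m → l m = 0)

include hl hl0 in
lemma RT_1a (m : ℕ) : bwd1 a (s1 a l u) (fwd1 a l u) m = l m := by
  unfold bwd1
  rcases le_or_gt m a with h | h
  · rw [if_pos h]
    unfold fwd1
    have h1 := s1_le_t a l u
    have h2 : l a ≤ l m := l_anti l hl h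
    omega
  · rw [if_neg (by omega)]
    exact (hl0 m (by omega)).symm

end Step1RT
section Types

def PPP (a : ℕ) (x : (ℕ → ℕ) × (ℕ → ℕ)) : Prop :=
  (∀ m, x.1 (m+1) ≤ x.1 m) ∧ (∀ m, x.2 (m+1) ≤ x.2 m) ∧ (∀ m, x.2 m ≤ x.1 m) ∧
    ∀ m, a ≤ m → x.1 m = 0

def wt (a : ℕ) (x : (ℕ → ℕ) × (ℕ → ℕ)) : ℕ := ∑ m ∈ Finset.range a, (x.1 m + x.2 m)

def PPt (a k : ℕ) : Type := {x : (ℕ → ℕ) × (ℕ → ℕ) // PPP a x ∧ wt a x = k}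

def Dec1 (a k : ℕ) : Type :=
  {y : ℕ × ((ℕ → ℕ) × (ℕ → ℕ)) // (PPP (a+1) y.2 ∧ M2 a y.2.1 y.2.2 0 = 0) ∧
    wt (a+1) y.2 + y.1 * (a+1) = k}

def Dec2 (a k : ℕ) : Type :=
  {z : (ℕ × ℕ) × ((ℕ → ℕ) × (ℕ → ℕ)) // PPP a z.2 ∧
    wt a z.2 + z.1.1 * (a+1) + z.1.2 * (a+2) = k}

lemma u_zero {a : ℕ} {x : (ℕ → ℕ) × (ℕ → ℕ)} (h : PPP a x) (m : ℕ) (hm : a ≤ m) :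
    x.2 m = 0 := by
  have h1 := h.2.2.1 m
  have h2 := h.2.2.2 m hm
  omega

def equiv1 (a k : ℕ) : PPt (a+1) k ≃ Dec1 a k where
  toFun x :=
    ⟨(s1 a x.1.1 x.1.2, (fwd1 a x.1.1 x.1.2, x.1.2)), by
      obtain ⟨⟨hl, hu, hul, hl0⟩, hwt⟩ := x.2
      refine ⟨⟨⟨fwd1_anti a x.1.1 x.1.2 hl, hu, u_le_fwd1 a x.1.1 x.1.2 hl hul hl0,
        fwd1_zero a x.1.1 x.1.2 hl0⟩, fwd1_cond a x.1.1 x.1.2⟩, ?_⟩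
      show wt (a+1) (fwd1 a x.1.1 x.1.2, x.1.2) + s1 a x.1.1 x.1.2 * (a+1) = k
      have := fwd1_weight a x.1.1 x.1.2 hl
      unfold wt at *
      simp only at *
      omega⟩
  invFun y :=
    ⟨(bwd1 a y.1.1 y.1.2.1, y.1.2.2), by
      obtain ⟨⟨⟨hl, hu, hul, hl0⟩, hcond⟩, hwt⟩ := y.2
      have hu0 : ∀ m, a + 1 ≤ m → y.1.2.2 m = 0 := by
        intro m hm
        have := hul m; have := hl0 m hm; omega
      refine ⟨⟨bwd1_anti a y.1.1 y.1.2.1 hl, hu,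
        u_le_bwd1 a y.1.1 y.1.2.1 y.1.2.2 hul hu0, bwd1_zero a y.1.1 y.1.2.1⟩, ?_⟩
      show wt (a+1) (bwd1 a y.1.1 y.1.2.1, y.1.2.2) = k
      have := bwd1_weight a y.1.1 y.1.2.1 y.1.2.2 hul
      unfold wt at *
      simp only at *
      omega⟩
  left_inv x := by
    obtain ⟨⟨hl, hu, hul, hl0⟩, hwt⟩ := x.2
    apply Subtype.ext
    simp only
    apply Prod.ext
    · funext m
      exact RT_1a a x.1.1 x.1.2 hl hl0 m
    · rfl
  right_inv y := by
    obtain ⟨⟨⟨hl, hu, hul, hl0⟩, hcond⟩, hwt⟩ := y.2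
    apply Subtype.ext
    simp only
    apply Prod.ext
    · exact bwd1_s a y.1.1 y.1.2.1 y.1.2.2 hul hcond
    · apply Prod.ext
      · funext m
        exact RT_1b a y.1.1 y.1.2.1 y.1.2.2 hul hl0 hcond m
      · rfl

def equiv2 (a k : ℕ) : Dec1 a k ≃ Dec2 a k where
  toFun y :=
    ⟨((y.1.1, y.1.2.1 a), (fwdL a y.1.2.1 y.1.2.2, fwdU a y.1.2.1 y.1.2.2)), by
      obtain ⟨⟨⟨hl, hu, hul, hl0⟩, hcond⟩, hwt⟩ := y.2
      refine ⟨⟨fwdL_anti a y.1.2.1 y.1.2.2 hl, fwdU_anti a y.1.2.1 y.1.2.2 hl hu hul hl0,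
        fwdU_le_fwdL a y.1.2.1 y.1.2.2 hl hu hul hl0,
        fun m hm => fwdL_zero a y.1.2.1 y.1.2.2 hl m hm⟩, ?_⟩
      show wt a (fwdL a y.1.2.1 y.1.2.2, fwdU a y.1.2.1 y.1.2.2)
          + y.1.1 * (a+1) + y.1.2.1 a * (a+2) = k
      have := fwd_weight a y.1.2.1 y.1.2.2 hl hu hul hl0 hcond
      unfold wt at *
      simp only at *
      omega⟩
  invFun z :=
    ⟨(z.1.1.1, (bwdL a z.1.1.2 z.1.2.1 z.1.2.2, bwdU a z.1.1.2 z.1.2.1 z.1.2.2)), by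
      obtain ⟨⟨hl, hu, hul, hl0⟩, hwt⟩ := z.2
      refine ⟨⟨⟨bwdL_anti a z.1.1.2 z.1.2.1 z.1.2.2 hl hu hul,
        bwdU_anti a z.1.1.2 z.1.2.1 z.1.2.2 hu,
        bwdU_le_bwdL a z.1.1.2 z.1.2.1 z.1.2.2 hul hl0,
        bwdL_zero a z.1.1.2 z.1.2.1 z.1.2.2⟩,
        bwd_cond a z.1.1.2 z.1.2.1 z.1.2.2 hul hl0⟩, ?_⟩
      show wt (a+1) (bwdL a z.1.1.2 z.1.2.1 z.1.2.2, bwdU a z.1.1.2 z.1.2.1 z.1.2.2)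
          + z.1.1.1 * (a+1) = k
      have := bwd_weight a z.1.1.2 z.1.2.1 z.1.2.2 hul hl0
      unfold wt at *
      simp only at *
      omega⟩
  left_inv y := by
    obtain ⟨⟨⟨hl, hu, hul, hl0⟩, hcond⟩, hwt⟩ := y.2
    apply Subtype.ext
    simp only
    apply Prod.ext
    · rfl
    · apply Prod.ext
      · funext m
        exact RT1_L a y.1.2.1 y.1.2.2 hl hu hul hl0 hcond m
      · funext m
        exact RT1_U a y.1.2.1 y.1.2.2 hl hu hul hl0 hcond m
  right_inv z := by
    obtain ⟨⟨hl, hu, hul, hl0⟩, hwt⟩ := z.2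
    apply Subtype.ext
    simp only
    apply Prod.ext
    · apply Prod.ext
      · rfl
      · exact bwdL_top a z.1.1.2 z.1.2.1 z.1.2.2 hul hl0
    · apply Prod.ext
      · funext m
        exact RT2_L a z.1.1.2 z.1.2.1 z.1.2.2 hul hl0 m
      · funext m
        exact RT2_U a z.1.1.2 z.1.2.1 z.1.2.2 hul hl0 m

end Types
section Coloured

def Colt (a k : ℕ) : Type := {p : (ℕ → ℕ) × (ℕ → ℕ) //
    (∀ j, ¬(1 ≤ j ∧ j ≤ a + 1) → p.1 j = 0) ∧
    (∀ j, ¬(2 ≤ j ∧ j ≤ a) → p.2 j = 0) ∧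
    ∑ j ∈ Finset.range (a + 2), j * (p.1 j + p.2 j) = k}

def DecC (a k : ℕ) : Type :=
  {z : (ℕ × ℕ) × ((ℕ → ℕ) × (ℕ → ℕ)) //
    ((∀ j, ¬(1 ≤ j ∧ j ≤ a + 1) → z.2.1 j = 0) ∧
     (∀ j, ¬(2 ≤ j ∧ j ≤ a) → z.2.2 j = 0)) ∧
    (∑ j ∈ Finset.range (a + 2), j * (z.2.1 j + z.2.2 j)) + z.1.1 * (a+1) + z.1.2 * (a+2) = k}

lemma keySum (a : ℕ) (p1 p2 : ℕ → ℕ) (h2 : p2 (a+2) = 0) :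
    ∑ j ∈ Finset.range (a+3), j * (p1 j + p2 j)
      = (∑ j ∈ Finset.range (a+2),
          j * (Function.update p1 (a+2) 0 j + Function.update p2 (a+1) 0 j))
        + p2 (a+1) * (a+1) + p1 (a+2) * (a+2) := by
  have hne1 : (a+1 : ℕ) ≠ a + 2 := by omega
  rw [show a+3 = (a+2)+1 from rfl, Finset.sum_range_succ,
    Finset.sum_range_succ (fun j => j * (p1 j + p2 j)) (a+1),
    Finset.sum_range_succ (fun j => j * (Function.update p1 (a+2) 0 j
      + Function.update p2 (a+1) 0 j)) (a+1)]
  have e1 : ∀ j ∈ Finset.range (a+1),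
      j * (Function.update p1 (a+2) 0 j + Function.update p2 (a+1) 0 j)
        = j * (p1 j + p2 j) := by
    intro j hj
    have hjl := Finset.mem_range.mp hj
    have hne2 : j ≠ a + 2 := by omega
    have hne3 : j ≠ a + 1 := by omega
    rw [Function.update_of_ne hne2, Function.update_of_ne hne3]
  rw [Finset.sum_congr rfl e1]
  rw [Function.update_of_ne hne1, Function.update_self]
  rw [h2]
  ring

lemma keySum2 (a s t : ℕ) (q1 q2 : ℕ → ℕ) (h2 : q2 (a+1) = 0) (h3 : q2 (a+2) = 0) :
    ∑ j ∈ Finset.range (a+3),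
        j * (Function.update q1 (a+2) t j + Function.update q2 (a+1) s j)
      = (∑ j ∈ Finset.range (a+2), j * (q1 j + q2 j)) + s * (a+1) + t * (a+2) := by
  have hne1 : (a+1 : ℕ) ≠ a + 2 := by omega
  have hne2 : (a+2 : ℕ) ≠ a + 1 := by omega
  rw [show a+3 = (a+2)+1 from rfl, Finset.sum_range_succ,
    Finset.sum_range_succ (fun j => j * (q1 j + q2 j)) (a+1),
    Finset.sum_range_succ (fun j => j * (Function.update q1 (a+2) t j
      + Function.update q2 (a+1) s j)) (a+1)]
  have e1 : ∀ j ∈ Finset.range (a+1),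
      j * (Function.update q1 (a+2) t j + Function.update q2 (a+1) s j)
        = j * (q1 j + q2 j) := by
    intro j hj
    have hjl := Finset.mem_range.mp hj
    have hne3 : j ≠ a + 2 := by omega
    have hne4 : j ≠ a + 1 := by omega
    rw [Function.update_of_ne hne3, Function.update_of_ne hne4]
  rw [Finset.sum_congr rfl e1]
  rw [Function.update_self, Function.update_of_ne hne1, Function.update_self,
    Function.update_of_ne hne2]
  rw [h2, h3]
  ring

def equivC (a k : ℕ) (ha : 1 ≤ a) : Colt (a+1) k ≃ DecC a k where
  toFun p :=
    ⟨((p.1.2 (a+1), p.1.1 (a+2)),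
      (Function.update p.1.1 (a+2) 0, Function.update p.1.2 (a+1) 0)), by
      obtain ⟨hp1, hp2, hsum⟩ := p.2
      refine ⟨⟨?_, ?_⟩, ?_⟩
      · intro j hj
        show Function.update p.1.1 (a+2) 0 j = 0
        rcases eq_or_ne j (a+2) with h | h
        · subst h; exact Function.update_self _ _ _
        · rw [Function.update_of_ne h]
          exact hp1 j (by omega)
      · intro j hj
        show Function.update p.1.2 (a+1) 0 j = 0
        rcases eq_or_ne j (a+1) with h | h
        · subst h; exact Function.update_self _ _ _
        · rw [Function.update_of_ne h]
          exact hp2 j (by omega)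
      · have hk := keySum a p.1.1 p.1.2 (hp2 (a+2) (by omega))
        show (∑ j ∈ Finset.range (a + 2),
            j * (Function.update p.1.1 (a+2) 0 j + Function.update p.1.2 (a+1) 0 j))
          + p.1.2 (a+1) * (a+1) + p.1.1 (a+2) * (a+2) = k
        rw [← hk]
        exact hsum⟩
  invFun z :=
    ⟨(Function.update z.1.2.1 (a+2) z.1.1.2, Function.update z.1.2.2 (a+1) z.1.1.1), by
      obtain ⟨⟨hq1, hq2⟩, hsum⟩ := z.2
      refine ⟨?_, ?_, ?_⟩
      · intro j hj
        have hne : j ≠ a+2 := by omega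
        show Function.update z.1.2.1 (a+2) z.1.1.2 j = 0
        rw [Function.update_of_ne hne]
        exact hq1 j (by omega)
      · intro j hj
        have hne : j ≠ a+1 := by omega
        show Function.update z.1.2.2 (a+1) z.1.1.1 j = 0
        rw [Function.update_of_ne hne]
        exact hq2 j (by omega)
      · show ∑ j ∈ Finset.range (a+1+2),
            j * (Function.update z.1.2.1 (a+2) z.1.1.2 j
              + Function.update z.1.2.2 (a+1) z.1.1.1 j) = k
        rw [show a+1+2 = a+3 from rfl,
          keySum2 a z.1.1.1 z.1.1.2 z.1.2.1 z.1.2.2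
            (hq2 (a+1) (by omega)) (hq2 (a+2) (by omega))]
        exact hsum⟩
  left_inv p := by
    obtain ⟨hp1, hp2, hsum⟩ := p.2
    apply Subtype.ext
    show (Function.update (Function.update p.1.1 (a+2) 0) (a+2) (p.1.1 (a+2)),
      Function.update (Function.update p.1.2 (a+1) 0) (a+1) (p.1.2 (a+1))) = p.1
    rw [Function.update_idem, Function.update_idem,
      Function.update_eq_self, Function.update_eq_self]
  right_inv z := by
    obtain ⟨⟨hq1, hq2⟩, hsum⟩ := z.2
    apply Subtype.ext
    show ((Function.update z.1.2.2 (a+1) z.1.1.1 (a+1),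
        Function.update z.1.2.1 (a+2) z.1.1.2 (a+2)),
      (Function.update (Function.update z.1.2.1 (a+2) z.1.1.2) (a+2) 0,
       Function.update (Function.update z.1.2.2 (a+1) z.1.1.1) (a+1) 0)) = z.1
    have hne : (a+2 : ℕ) ≠ a+1 := by omega
    rw [Function.update_self, Function.update_self,
      Function.update_idem, Function.update_idem,
      Function.update_eq_self_iff.mpr (hq1 (a+2) (by omega)).symm,
      Function.update_eq_self_iff.mpr (hq2 (a+1) (by omega)).symm]

end Coloured
section Finiteness

lemma ppt_bound {a k : ℕ} (x : PPt a k) {m : ℕ} (hm : m < a) :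
    x.1.1 m ≤ k ∧ x.1.2 m ≤ k := by
  have h1 : x.1.1 m + x.1.2 m ≤ ∑ j ∈ Finset.range a, (x.1.1 j + x.1.2 j) :=
    Finset.single_le_sum (f := fun j => x.1.1 j + x.1.2 j)
      (fun i _ => Nat.zero_le _) (Finset.mem_range.mpr hm)
  have h2 := x.2.2
  unfold wt at h2
  omega

instance pptFinite (a k : ℕ) : Finite (PPt a k) := by
  apply Finite.of_injective (f := fun x : PPt a k =>
    ((fun i : Fin a => (⟨x.1.1 i, by have := (ppt_bound x i.isLt).1; omega⟩ : Fin (k+1))),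
     (fun i : Fin a => (⟨x.1.2 i, by have := (ppt_bound x i.isLt).2; omega⟩ : Fin (k+1)))))
  intro x y h
  have h1 := congrArg Prod.fst h
  have h2 := congrArg Prod.snd h
  simp only at h1 h2
  apply Subtype.ext
  apply Prod.ext
  · funext m
    by_cases hm : m < a
    · have := congrFun h1 ⟨m, hm⟩
      exact congrArg Fin.val this
    · rw [x.2.1.2.2.2 m (by omega), y.2.1.2.2.2 m (by omega)]
  · funext m
    by_cases hm : m < a
    · have := congrFun h2 ⟨m, hm⟩
      exact congrArg Fin.val this
    · rw [u_zero x.2.1 m (by omega), u_zero y.2.1 m (by omega)]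

lemma colt_bound {a k : ℕ} (x : Colt a k) {j : ℕ} (hj : j < a + 2) :
    x.1.1 j ≤ k ∧ x.1.2 j ≤ k := by
  rcases Nat.eq_zero_or_pos j with h0 | h0
  · subst h0
    rw [x.2.1 0 (by omega), x.2.2.1 0 (by omega)]
    omega
  · have h1 : j * (x.1.1 j + x.1.2 j) ≤ ∑ i ∈ Finset.range (a+2), i * (x.1.1 i + x.1.2 i) :=
      Finset.single_le_sum (f := fun i => i * (x.1.1 i + x.1.2 i)) (fun i _ => Nat.zero_le _) (Finset.mem_range.mpr hj)
    have h2 := x.2.2.2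
    have h3 : x.1.1 j + x.1.2 j ≤ j * (x.1.1 j + x.1.2 j) :=
      Nat.le_mul_of_pos_left _ h0
    omega

instance coltFinite (a k : ℕ) : Finite (Colt a k) := by
  apply Finite.of_injective (f := fun x : Colt a k =>
    ((fun i : Fin (a+2) => (⟨x.1.1 i, by have := (colt_bound x i.isLt).1; omega⟩ : Fin (k+1))),
     (fun i : Fin (a+2) => (⟨x.1.2 i, by have := (colt_bound x i.isLt).2; omega⟩ : Fin (k+1)))))
  intro x y h
  have h1 := congrArg Prod.fst h
  have h2 := congrArg Prod.snd h
  simp only at h1 h2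
  apply Subtype.ext
  apply Prod.ext
  · funext j
    by_cases hj : j < a + 2
    · exact congrArg Fin.val (congrFun h1 ⟨j, hj⟩)
    · rw [x.2.1 j (by omega), y.2.1 j (by omega)]
  · funext j
    by_cases hj : j < a + 2
    · exact congrArg Fin.val (congrFun h2 ⟨j, hj⟩)
    · rw [x.2.2.1 j (by omega), y.2.2.1 j (by omega)]

end Finiteness

section CardDec

lemma card_dec (a k : ℕ) (IH : ∀ k', Nat.card (PPt a k') = Nat.card (Colt a k')) :
    Nat.card (Dec2 a k) = Nat.card (DecC a k) := by
  have e1 : Dec2 a k ≃ Σ s : ℕ × ℕ, {x : (ℕ → ℕ) × (ℕ → ℕ) //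
      PPP a x ∧ wt a x + s.1 * (a+1) + s.2 * (a+2) = k} :=
    Equiv.subtypeProdEquivSigmaSubtype
      (fun (s : ℕ × ℕ) (x : (ℕ → ℕ) × (ℕ → ℕ)) =>
        PPP a x ∧ wt a x + s.1 * (a+1) + s.2 * (a+2) = k)
  have e2 : DecC a k ≃ Σ s : ℕ × ℕ, {x : (ℕ → ℕ) × (ℕ → ℕ) //
      ((∀ j, ¬(1 ≤ j ∧ j ≤ a + 1) → x.1 j = 0) ∧
       (∀ j, ¬(2 ≤ j ∧ j ≤ a) → x.2 j = 0)) ∧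
      (∑ j ∈ Finset.range (a + 2), j * (x.1 j + x.2 j)) + s.1 * (a+1) + s.2 * (a+2) = k} :=
    Equiv.subtypeProdEquivSigmaSubtype
      (fun (s : ℕ × ℕ) (x : (ℕ → ℕ) × (ℕ → ℕ)) =>
        ((∀ j, ¬(1 ≤ j ∧ j ≤ a + 1) → x.1 j = 0) ∧
         (∀ j, ¬(2 ≤ j ∧ j ≤ a) → x.2 j = 0)) ∧
        (∑ j ∈ Finset.range (a + 2), j * (x.1 j + x.2 j)) + s.1 * (a+1) + s.2 * (a+2) = k)
  rw [Nat.card_congr e1, Nat.card_congr e2]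
  have key : ∀ s : ℕ × ℕ, Nonempty
      ({x : (ℕ → ℕ) × (ℕ → ℕ) // PPP a x ∧ wt a x + s.1 * (a+1) + s.2 * (a+2) = k}
      ≃ {x : (ℕ → ℕ) × (ℕ → ℕ) //
        ((∀ j, ¬(1 ≤ j ∧ j ≤ a + 1) → x.1 j = 0) ∧
         (∀ j, ¬(2 ≤ j ∧ j ≤ a) → x.2 j = 0)) ∧
        (∑ j ∈ Finset.range (a + 2), j * (x.1 j + x.2 j)) + s.1 * (a+1) + s.2 * (a+2) = k}) := by
    intro s
    by_cases hC : s.1 * (a+1) + s.2 * (a+2) ≤ k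
    · have eA : {x : (ℕ → ℕ) × (ℕ → ℕ) // PPP a x ∧ wt a x + s.1 * (a+1) + s.2 * (a+2) = k}
          ≃ PPt a (k - s.1 * (a+1) - s.2 * (a+2)) := by
        apply Equiv.subtypeEquivRight
        intro x
        constructor
        · rintro ⟨h1, h2⟩; exact ⟨h1, by omega⟩
        · rintro ⟨h1, h2⟩; exact ⟨h1, by omega⟩
      have eB : {x : (ℕ → ℕ) × (ℕ → ℕ) //
          ((∀ j, ¬(1 ≤ j ∧ j ≤ a + 1) → x.1 j = 0) ∧
           (∀ j, ¬(2 ≤ j ∧ j ≤ a) → x.2 j = 0)) ∧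
          (∑ j ∈ Finset.range (a + 2), j * (x.1 j + x.2 j)) + s.1 * (a+1) + s.2 * (a+2) = k}
          ≃ Colt a (k - s.1 * (a+1) - s.2 * (a+2)) := by
        apply Equiv.subtypeEquivRight
        intro x
        constructor
        · rintro ⟨⟨h1, h2⟩, h3⟩; exact ⟨h1, h2, by omega⟩
        · rintro ⟨h1, h2, h3⟩; exact ⟨⟨h1, h2⟩, by omega⟩
      have hmid : Nonempty (PPt a (k - s.1 * (a+1) - s.2 * (a+2))
          ≃ Colt a (k - s.1 * (a+1) - s.2 * (a+2))) :=
        Finite.card_eq.mp (IH _)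
      exact ⟨eA.trans ((Classical.choice hmid).trans eB.symm)⟩
    · have hA : IsEmpty {x : (ℕ → ℕ) × (ℕ → ℕ) //
          PPP a x ∧ wt a x + s.1 * (a+1) + s.2 * (a+2) = k} := by
        constructor; rintro ⟨x, h1, h2⟩; omega
      have hB : IsEmpty {x : (ℕ → ℕ) × (ℕ → ℕ) //
          ((∀ j, ¬(1 ≤ j ∧ j ≤ a + 1) → x.1 j = 0) ∧
           (∀ j, ¬(2 ≤ j ∧ j ≤ a) → x.2 j = 0)) ∧
          (∑ j ∈ Finset.range (a + 2), j * (x.1 j + x.2 j)) + s.1 * (a+1) + s.2 * (a+2) = k} := by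
        constructor; rintro ⟨x, h1, h2⟩; omega
      exact ⟨@Equiv.equivOfIsEmpty _ _ hA hB⟩
  exact Nat.card_congr (Equiv.sigmaCongrRight (fun s => Classical.choice (key s)))

end CardDec
section Base

def base1 (k : ℕ) : PPt 1 k ≃ Colt 1 k where
  toFun x :=
    ⟨(fun j => if j = 1 then x.1.1 0 - x.1.2 0 else if j = 2 then x.1.2 0 else 0,
      fun _ => 0), by
      obtain ⟨⟨hl, hu, hul, hl0⟩, hwt⟩ := x.2
      have hw : x.1.1 0 + x.1.2 0 = k := by
        have h := hwt
        unfold wt at h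
        rwa [Finset.sum_range_one] at h
      refine ⟨?_, fun j _ => rfl, ?_⟩
      · intro j hj
        have hne1 : j ≠ 1 := by omega
        have hne2 : j ≠ 2 := by omega
        show (if j = 1 then x.1.1 0 - x.1.2 0 else if j = 2 then x.1.2 0 else 0) = 0
        rw [if_neg hne1, if_neg hne2]
      · have h0 := hul 0
        show ∑ j ∈ Finset.range 3,
          j * ((if j = 1 then x.1.1 0 - x.1.2 0 else if j = 2 then x.1.2 0 else 0) + 0) = k
        rw [show (3:ℕ) = 2 + 1 from rfl, Finset.sum_range_succ, Finset.sum_range_succ,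
          Finset.sum_range_one]
        norm_num
        omega⟩
  invFun p :=
    ⟨(fun m => if m = 0 then p.1.1 1 + p.1.1 2 else 0,
      fun m => if m = 0 then p.1.1 2 else 0), by
      obtain ⟨hp1, hp2, hsum⟩ := p.2
      have h1 : p.1.2 1 = 0 := hp2 1 (by omega)
      have h2 : p.1.2 2 = 0 := hp2 2 (by omega)
      have hs : p.1.1 1 + 2 * p.1.1 2 = k := by
        have hsum' : ∑ j ∈ Finset.range (2+1), j * (p.1.1 j + p.1.2 j) = k := hsum
        rw [Finset.sum_range_succ, Finset.sum_range_succ, Finset.sum_range_one] at hsum'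
        norm_num at hsum'
        omega
      refine ⟨⟨?_, ?_, ?_, ?_⟩, ?_⟩
      · intro m
        show (if m + 1 = 0 then p.1.1 1 + p.1.1 2 else 0)
          ≤ (if m = 0 then p.1.1 1 + p.1.1 2 else 0)
        rw [if_neg (Nat.succ_ne_zero m)]
        exact Nat.zero_le _
      · intro m
        show (if m + 1 = 0 then p.1.1 2 else 0) ≤ (if m = 0 then p.1.1 2 else 0)
        rw [if_neg (Nat.succ_ne_zero m)]
        exact Nat.zero_le _
      · intro m
        show (if m = 0 then p.1.1 2 else 0) ≤ (if m = 0 then p.1.1 1 + p.1.1 2 else 0)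
        rcases eq_or_ne m 0 with h | h
        · subst h; rw [if_pos rfl, if_pos rfl]; omega
        · rw [if_neg h, if_neg h]
      · intro m hm
        show (if m = 0 then p.1.1 1 + p.1.1 2 else 0) = 0
        rw [if_neg (by omega : m ≠ 0)]
      · show wt 1 _ = k
        unfold wt
        rw [Finset.sum_range_one]
        show ((if (0:ℕ) = 0 then p.1.1 1 + p.1.1 2 else 0)
          + (if (0:ℕ) = 0 then p.1.1 2 else 0)) = k
        rw [if_pos rfl, if_pos rfl]
        omega⟩
  left_inv x := by
    obtain ⟨⟨hl, hu, hul, hl0⟩, hwt⟩ := x.2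
    apply Subtype.ext
    apply Prod.ext
    · funext m
      show (if m = 0 then (x.1.1 0 - x.1.2 0) + x.1.2 0 else 0) = x.1.1 m
      rcases eq_or_ne m 0 with h | h
      · subst h
        rw [if_pos rfl]
        have := hul 0
        omega
      · rw [if_neg h]
        exact (hl0 m (by omega)).symm
    · funext m
      show (if m = 0 then x.1.2 0 else 0) = x.1.2 m
      rcases eq_or_ne m 0 with h | h
      · subst h; rw [if_pos rfl]
      · rw [if_neg h]
        exact (u_zero ⟨hl, hu, hul, hl0⟩ m (by omega)).symm
  right_inv p := by
    obtain ⟨hp1, hp2, hsum⟩ := p.2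
    apply Subtype.ext
    apply Prod.ext
    · funext j
      show (if j = 1 then (p.1.1 1 + p.1.1 2) - p.1.1 2
        else if j = 2 then p.1.1 2 else 0) = p.1.1 j
      rcases eq_or_ne j 1 with h | h
      · subst h; rw [if_pos rfl]; omega
      · rw [if_neg h]
        rcases eq_or_ne j 2 with h2 | h2
        · subst h2; rw [if_pos rfl]
        · rw [if_neg h2]
          exact (hp1 j (by omega)).symm
    · funext j
      show (0:ℕ) = p.1.2 j
      exact (hp2 j (by omega)).symm

end Base

section Top

lemma sum_dite (a : ℕ) (g : Fin a → ℕ) :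
    ∑ m ∈ Finset.range a, (if h : m < a then g ⟨m, h⟩ else 0) = ∑ j : Fin a, g j := by
  rw [← Fin.sum_univ_eq_sum_range (fun m => if h : m < a then g ⟨m, h⟩ else 0) a]
  apply Finset.sum_congr rfl
  intro i _
  simp

def equivTop (a k : ℕ) :
    {f : Fin 2 → Fin a → ℕ //
      (∀ i : Fin 2, ∀ j j' : Fin a, j ≤ j' → f i j' ≤ f i j) ∧
      (∀ j : Fin a, f 1 j ≤ f 0 j) ∧
      ∑ i, ∑ j, f i j = k} ≃ PPt a k where
  toFun f :=
    ⟨(fun m => if h : m < a then f.1 0 ⟨m, h⟩ else 0,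
      fun m => if h : m < a then f.1 1 ⟨m, h⟩ else 0), by
      obtain ⟨hmono, hcol, hsum⟩ := f.2
      refine ⟨⟨?_, ?_, ?_, ?_⟩, ?_⟩
      · intro m
        show (if h : m + 1 < a then f.1 0 ⟨m+1, h⟩ else 0)
          ≤ (if h : m < a then f.1 0 ⟨m, h⟩ else 0)
        by_cases h2 : m + 1 < a
        · rw [dif_pos h2, dif_pos (by omega : m < a)]
          exact hmono 0 ⟨m, by omega⟩ ⟨m+1, h2⟩ (by simp [Fin.le_def])
        · rw [dif_neg h2]
          exact Nat.zero_le _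
      · intro m
        show (if h : m + 1 < a then f.1 1 ⟨m+1, h⟩ else 0)
          ≤ (if h : m < a then f.1 1 ⟨m, h⟩ else 0)
        by_cases h2 : m + 1 < a
        · rw [dif_pos h2, dif_pos (by omega : m < a)]
          exact hmono 1 ⟨m, by omega⟩ ⟨m+1, h2⟩ (by simp [Fin.le_def])
        · rw [dif_neg h2]
          exact Nat.zero_le _
      · intro m
        show (if h : m < a then f.1 1 ⟨m, h⟩ else 0)
          ≤ (if h : m < a then f.1 0 ⟨m, h⟩ else 0)
        by_cases h2 : m < a
        · rw [dif_pos h2, dif_pos h2]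
          exact hcol ⟨m, h2⟩
        · rw [dif_neg h2, dif_neg h2]
      · intro m hm
        show (if h : m < a then f.1 0 ⟨m, h⟩ else 0) = 0
        rw [dif_neg (by omega)]
      · show wt a _ = k
        unfold wt
        rw [Fin.sum_univ_two] at hsum
        show ∑ m ∈ Finset.range a, ((if h : m < a then f.1 0 ⟨m, h⟩ else 0)
          + (if h : m < a then f.1 1 ⟨m, h⟩ else 0)) = k
        rw [Finset.sum_add_distrib, sum_dite a (f.1 0), sum_dite a (f.1 1)]
        exact hsum⟩
  invFun x :=
    ⟨fun i j => if i = 0 then x.1.1 j.val else x.1.2 j.val, by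
      obtain ⟨⟨hl, hu, hul, hl0⟩, hwt⟩ := x.2
      refine ⟨?_, ?_, ?_⟩
      · intro i j j' hjj'
        show (if i = 0 then x.1.1 j'.val else x.1.2 j'.val)
          ≤ (if i = 0 then x.1.1 j.val else x.1.2 j.val)
        rcases eq_or_ne i 0 with h | h
        · rw [if_pos h, if_pos h]
          exact antitone_nat_of_succ_le hl hjj'
        · rw [if_neg h, if_neg h]
          exact antitone_nat_of_succ_le hu hjj'
      · intro j
        show (if (1 : Fin 2) = 0 then x.1.1 j.val else x.1.2 j.val)
          ≤ (if (0 : Fin 2) = 0 then x.1.1 j.val else x.1.2 j.val)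
        rw [if_neg (by decide : (1 : Fin 2) ≠ 0), if_pos rfl]
        exact hul j.val
      · rw [Fin.sum_univ_two]
        show (∑ j : Fin a, if (0 : Fin 2) = 0 then x.1.1 j.val else x.1.2 j.val)
          + (∑ j : Fin a, if (1 : Fin 2) = 0 then x.1.1 j.val else x.1.2 j.val) = k
        have e1 : (∑ j : Fin a, if (0 : Fin 2) = 0 then x.1.1 j.val else x.1.2 j.val)
            = ∑ j : Fin a, x.1.1 j.val :=
          Finset.sum_congr rfl (fun j _ => if_pos rfl)
        have e2 : (∑ j : Fin a, if (1 : Fin 2) = 0 then x.1.1 j.val else x.1.2 j.val)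
            = ∑ j : Fin a, x.1.2 j.val :=
          Finset.sum_congr rfl (fun j _ => if_neg (by decide))
        rw [e1, e2, Fin.sum_univ_eq_sum_range (fun m => x.1.1 m) a,
          Fin.sum_univ_eq_sum_range (fun m => x.1.2 m) a]
        unfold wt at hwt
        rw [Finset.sum_add_distrib] at hwt
        exact hwt⟩
  left_inv f := by
    apply Subtype.ext
    funext i j
    show (if i = 0 then (if h : (j:ℕ) < a then f.1 0 ⟨j, h⟩ else 0)
      else (if h : (j:ℕ) < a then f.1 1 ⟨j, h⟩ else 0)) = f.1 i j
    rcases eq_or_ne i 0 with h | h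
    · subst h
      rw [if_pos rfl, dif_pos j.isLt]
    · have h1 : i = 1 := by
        fin_cases i
        · exact absurd rfl h
        · rfl
      subst h1
      rw [if_neg h, dif_pos j.isLt]
  right_inv x := by
    obtain ⟨⟨hl, hu, hul, hl0⟩, hwt⟩ := x.2
    apply Subtype.ext
    apply Prod.ext
    · funext m
      show (if h : m < a then (if (0 : Fin 2) = 0 then x.1.1 m else x.1.2 m) else 0)
        = x.1.1 m
      by_cases hm : m < a
      · rw [dif_pos hm, if_pos rfl]
      · rw [dif_neg hm]
        exact (hl0 m (by omega)).symm
    · funext m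
      show (if h : m < a then (if (1 : Fin 2) = 0 then x.1.1 m else x.1.2 m) else 0)
        = x.1.2 m
      by_cases hm : m < a
      · rw [dif_pos hm, if_neg (by decide : (1 : Fin 2) ≠ 0)]
      · rw [dif_neg hm]
        exact (u_zero ⟨hl, hu, hul, hl0⟩ m (by omega)).symm

end Top

lemma main_card : ∀ a : ℕ, 1 ≤ a → ∀ k : ℕ, Nat.card (PPt a k) = Nat.card (Colt a k) := by
  intro a ha
  induction a, ha using Nat.le_induction with
  | base => intro k; exact Nat.card_congr (base1 k)
  | succ a ha IH =>
    intro k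
    calc Nat.card (PPt (a+1) k) = Nat.card (Dec1 a k) := Nat.card_congr (equiv1 a k)
      _ = Nat.card (Dec2 a k) := Nat.card_congr (equiv2 a k)
      _ = Nat.card (DecC a k) := card_dec a k IH
      _ = Nat.card (Colt (a+1) k) := (Nat.card_congr (equivC a k ha)).symm

end PPCproof

theorem planePartitionCount_eq_colouredCount (a : ℕ) (ha : 1 ≤ a) (k : ℕ) :
    planePartitionCount a k = colouredCount a k := by
  have h1 : planePartitionCount a k = Nat.card (PPCproof.PPt a k) :=
    Nat.card_congr (PPCproof.equivTop a k)
  have h2 : colouredCount a k = Nat.card (PPCproof.Colt a k) := rfl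
  rw [h1, h2, PPCproof.main_card a ha k]
end

section
/- The generating function for plane partitions with at most 2 rows and at most a columns (parts unbounded) is 1/((1-x)·(1-x²)²·(1-x³)²···(1-xᵃ)²·(1-x^{a+1})). -/
open PowerSeries

section PPaux
open PowerSeries Finset


def IsPartFun (b : ℕ) (v : ℕ → ℕ) : Prop := Antitone v ∧ ∀ j, b ≤ j → v j = 0

def PartN (b k : ℕ) : Type := {v : ℕ → ℕ // IsPartFun b v ∧ ∑ j ∈ Finset.range b, v j = k}

instance PartN.finite (b k : ℕ) : Finite (PartN b k) := by
  apply Finite.of_injective (f := fun v : PartN b k => fun j : Fin b =>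
    (⟨v.1 j, by
      have h1 : v.1 j ≤ ∑ j ∈ Finset.range b, v.1 j :=
        Finset.single_le_sum (fun i _ => Nat.zero_le _) (Finset.mem_range.2 j.2)
      have := v.2.2
      omega⟩ : Fin (k+1)))
  intro v w h
  apply Subtype.ext
  funext j
  by_cases hj : j < b
  · have := congrFun h ⟨j, hj⟩
    simpa using this
  · rw [v.2.1.2 j (by omega), w.2.1.2 j (by omega)]

noncomputable def Pc (b k : ℕ) : ℕ := Nat.card (PartN b k)

lemma Pc_zero (k : ℕ) : Pc 0 k = if k = 0 then 1 else 0 := by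
  rcases eq_or_ne k 0 with rfl | hk
  · simp only [if_pos rfl]
    have : Unique (PartN 0 0) := by
      refine ⟨⟨⟨fun _ => 0, ⟨antitone_const, fun _ _ => rfl⟩, by simp⟩⟩, ?_⟩
      rintro ⟨v, ⟨hv, hv0⟩, hs⟩
      apply Subtype.ext
      funext j
      exact hv0 j (Nat.zero_le _)
    exact Nat.card_unique
  · rw [if_neg hk]
    have : IsEmpty (PartN 0 k) := by
      constructor; rintro ⟨v, hv, hs⟩
      simp at hs; omega
    simp [Pc, Nat.card_of_isEmpty]

def stripZeroEquiv (b k : ℕ) : {v : PartN (b+1) k // v.1 b = 0} ≃ PartN b k where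
  toFun v := ⟨v.1.1, ⟨⟨v.1.2.1.1, fun j hj => by
      rcases eq_or_lt_of_le hj with rfl | h
      · exact v.2
      · exact v.1.2.1.2 j h⟩, by
      have := v.1.2.2
      rw [Finset.sum_range_succ, v.2, add_zero] at this
      exact this⟩⟩
  invFun v := ⟨⟨v.1, ⟨⟨v.2.1.1, fun j hj => v.2.1.2 j (by omega)⟩, by
      rw [Finset.sum_range_succ, v.2.1.2 b le_rfl, add_zero]
      exact v.2.2⟩⟩, v.2.1.2 b le_rfl⟩
  left_inv v := by apply Subtype.ext; apply Subtype.ext; rfl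
  right_inv v := by apply Subtype.ext; rfl

def stripPosEquiv (b k : ℕ) (hk : b + 1 ≤ k) :
    {v : PartN (b+1) k // v.1 b ≠ 0} ≃ PartN (b+1) (k - (b+1)) where
  toFun v := by
    refine ⟨fun j => v.1.1 j - 1, ⟨⟨fun j1 j2 h => Nat.sub_le_sub_right (v.1.2.1.1 h) 1,
      fun j hj => by simp only; rw [v.1.2.1.2 j hj]⟩, ?_⟩⟩
    have hpos : ∀ j ∈ Finset.range (b+1), 1 ≤ v.1.1 j := by
      intro j hj
      have h1 : v.1.1 b ≤ v.1.1 j := v.1.2.1.1 (by simpa using Nat.lt_succ_iff.1 (Finset.mem_range.1 hj))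
      have h2 := v.2
      omega
    have hsum : ∑ j ∈ Finset.range (b+1), (v.1.1 j - 1) + (b+1)
        = ∑ j ∈ Finset.range (b+1), v.1.1 j := by
      calc ∑ j ∈ Finset.range (b+1), (v.1.1 j - 1) + (b+1)
          = ∑ j ∈ Finset.range (b+1), (v.1.1 j - 1) + ∑ _j ∈ Finset.range (b+1), 1 := by simp
        _ = ∑ j ∈ Finset.range (b+1), ((v.1.1 j - 1) + 1) := Finset.sum_add_distrib.symm
        _ = ∑ j ∈ Finset.range (b+1), v.1.1 j :=
            Finset.sum_congr rfl (fun j hj => by have := hpos j hj; omega)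
    have h2 := v.1.2.2
    simp only
    omega
  invFun w := by
    refine ⟨⟨fun j => w.1 j + (if j < b + 1 then 1 else 0), ⟨⟨?_, fun j hj => by
      simp only; rw [w.2.1.2 j hj, if_neg (by omega)]⟩, ?_⟩⟩, ?_⟩
    · intro j1 j2 h
      simp only
      by_cases h2 : j2 < b + 1
      · rw [if_pos h2, if_pos (by omega)]
        exact Nat.add_le_add_right (w.2.1.1 h) 1
      · rw [if_neg h2, w.2.1.2 j2 (by omega), add_zero]
        exact Nat.zero_le _
    · have hsum : ∑ j ∈ Finset.range (b+1), (w.1 j + (if j < b+1 then 1 else 0))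
          = (∑ j ∈ Finset.range (b+1), w.1 j) + (b + 1) := by
        rw [Finset.sum_add_distrib]
        congr 1
        rw [Finset.sum_ite_of_true (by intro j hj; exact Finset.mem_range.1 hj)]
        simp
      simp only
      rw [hsum, w.2.2]
      omega
    · simp only
      rw [if_pos (by omega)]
      omega
  left_inv v := by
    apply Subtype.ext; apply Subtype.ext
    funext j
    by_cases hj : j < b + 1
    · simp only [if_pos hj]
      have hpos : 1 ≤ v.1.1 j := by
        have h1 : v.1.1 b ≤ v.1.1 j := v.1.2.1.1 (by omega)
        have h2 := v.2
        omega
      omega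
    · simp only [if_neg hj]
      rw [v.1.2.1.2 j (by omega)]
  right_inv w := by
    apply Subtype.ext
    funext j
    by_cases hj : j < b + 1
    · simp only [if_pos hj]; omega
    · simp only [if_neg hj, add_zero]
      rw [w.2.1.2 j (by omega)]

lemma Pc_succ (b k : ℕ) :
    Pc (b+1) k = Pc b k + (if b+1 ≤ k then Pc (b+1) (k-(b+1)) else 0) := by
  classical
  have e : PartN (b+1) k ≃ {v : PartN (b+1) k // v.1 b = 0} ⊕ {v : PartN (b+1) k // v.1 b ≠ 0} :=
    (Equiv.sumCompl _).symm
  rw [Pc, Nat.card_congr e, Nat.card_sum, Nat.card_congr (stripZeroEquiv b k)]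
  congr 1
  by_cases hk : b + 1 ≤ k
  · rw [if_pos hk, Nat.card_congr (stripPosEquiv b k hk)]; rfl
  · rw [if_neg hk]
    have : IsEmpty {v : PartN (b+1) k // v.1 b ≠ 0} := by
      constructor
      rintro ⟨⟨v, ⟨hmono, hvan⟩, hsum⟩, hb⟩
      have hb' : v b ≠ 0 := hb
      have h1 : ∀ j ∈ Finset.range (b+1), 1 ≤ v j := by
        intro j hj
        have := hmono (Nat.lt_succ_iff.1 (Finset.mem_range.1 hj))
        omega
      have h2 : ∑ _j ∈ Finset.range (b+1), 1 ≤ ∑ j ∈ Finset.range (b+1), v j :=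
        Finset.sum_le_sum h1
      simp only [Finset.sum_const, Finset.card_range, smul_eq_mul, mul_one] at h2
      omega
    simp [Nat.card_of_isEmpty]

lemma mkPc_step (b : ℕ) :
    (PowerSeries.mk fun k => (Pc (b+1) k : ℚ)) * (1 - X^(b+1)) = PowerSeries.mk fun k => (Pc b k : ℚ) := by
  ext k
  rw [mul_sub, mul_one, map_sub, coeff_mk, coeff_mul_X_pow', coeff_mk]
  have := Pc_succ b k
  split_ifs with h
  · rw [coeff_mk]
    push_cast [this, if_pos h]
    ring
  · rw [coeff_mk]
    push_cast [this, if_neg h]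
    ring

lemma mkPc_prod (b : ℕ) :
    (PowerSeries.mk fun k => (Pc b k : ℚ)) * ∏ j ∈ Finset.Icc 1 b, (1 - X^j) = 1 := by
  induction b with
  | zero =>
    have : Finset.Icc 1 0 = (∅ : Finset ℕ) := by simp
    rw [this, Finset.prod_empty, mul_one]
    ext k
    rw [coeff_mk, coeff_one, Pc_zero]
    split_ifs <;> simp
  | succ b ih =>
    have hins : Finset.Icc 1 (b+1) = insert (b+1) (Finset.Icc 1 b) := by
      ext x; simp [Finset.mem_Icc, Finset.mem_insert]; omega
    rw [hins, Finset.prod_insert (by simp), ← mul_assoc, mkPc_step b, ih]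

def PairT (b c k : ℕ) : Type :=
  {p : (ℕ → ℕ) × (ℕ → ℕ) // (IsPartFun b p.1 ∧ IsPartFun c p.2) ∧
    (∑ j ∈ Finset.range b, p.1 j) + (∑ j ∈ Finset.range c, p.2 j) = k}

noncomputable def Qc (b c k : ℕ) : ℕ := Nat.card (PairT b c k)

def pairSigmaEquiv (b c k : ℕ) :
    PairT b c k ≃ Σ ij : (Finset.HasAntidiagonal.antidiagonal k), (PartN b ij.1.1 × PartN c ij.1.2) where
  toFun p := ⟨⟨(∑ j ∈ Finset.range b, p.1.1 j, ∑ j ∈ Finset.range c, p.1.2 j),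
      Finset.HasAntidiagonal.mem_antidiagonal.2 p.2.2⟩,
    ⟨⟨p.1.1, p.2.1.1, rfl⟩, ⟨p.1.2, p.2.1.2, rfl⟩⟩⟩
  invFun x := ⟨(x.2.1.1, x.2.2.1), ⟨x.2.1.2.1, x.2.2.2.1⟩, by
    rw [x.2.1.2.2, x.2.2.2.2]
    exact Finset.HasAntidiagonal.mem_antidiagonal.1 x.1.2⟩
  left_inv p := rfl
  right_inv x := by
    obtain ⟨⟨⟨i, j⟩, hij⟩, ⟨u, hu1, hu2⟩, ⟨v, hv1, hv2⟩⟩ := x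
    dsimp only at hu2 hv2
    subst hu2; subst hv2
    rfl

instance PairT.finite (b c k : ℕ) : Finite (PairT b c k) :=
  Finite.of_equiv _ (pairSigmaEquiv b c k).symm

lemma Qc_conv (b c k : ℕ) :
    Qc b c k = ∑ ij ∈ Finset.HasAntidiagonal.antidiagonal k, Pc b ij.1 * Pc c ij.2 := by
  classical
  rw [Qc, Nat.card_congr (pairSigmaEquiv b c k)]
  letI : ∀ ij : (Finset.HasAntidiagonal.antidiagonal k : Finset (ℕ × ℕ)), Fintype (PartN b ij.1.1 × PartN c ij.1.2) :=
    fun ij => Fintype.ofFinite _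
  rw [Nat.card_eq_fintype_card, Fintype.card_sigma]
  rw [← Finset.sum_coe_sort (Finset.HasAntidiagonal.antidiagonal k) (fun ij => Pc b ij.1 * Pc c ij.2)]
  congr 1
  funext ij
  rw [← Nat.card_eq_fintype_card, Nat.card_prod]
  rfl

lemma mk_Qc (b c : ℕ) :
    (PowerSeries.mk fun k => (Qc b c k : ℚ)) =
      (PowerSeries.mk fun k => (Pc b k : ℚ)) * (PowerSeries.mk fun k => (Pc c k : ℚ)) := by
  ext k
  rw [coeff_mk, coeff_mul, Qc_conv]
  push_cast
  exact Finset.sum_congr rfl (fun ij _ => by rw [coeff_mk, coeff_mk])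

def NestedT (a k : ℕ) : Type :=
  {p : (ℕ → ℕ) × (ℕ → ℕ) // (IsPartFun a p.1 ∧ IsPartFun a p.2) ∧
    (∀ j, p.2 j ≤ p.1 j) ∧
    (∑ j ∈ Finset.range a, p.1 j) + (∑ j ∈ Finset.range a, p.2 j) = k}

def ViolT (a k : ℕ) : Type :=
  {p : (ℕ → ℕ) × (ℕ → ℕ) // (IsPartFun a p.1 ∧ IsPartFun a p.2) ∧
    (∃ j, p.1 j < p.2 j) ∧
    (∑ j ∈ Finset.range a, p.1 j) + (∑ j ∈ Finset.range a, p.2 j) = k}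

noncomputable def Nc (a k : ℕ) : ℕ := Nat.card (NestedT a k)
noncomputable def Vc (a k : ℕ) : ℕ := Nat.card (ViolT a k)

def splitEquiv (a k : ℕ) [DecidablePred fun p : (ℕ → ℕ) × (ℕ → ℕ) => ∀ j, p.2 j ≤ p.1 j] :
    PairT a a k ≃ NestedT a k ⊕ ViolT a k where
  toFun p := if h : ∀ j, p.1.2 j ≤ p.1.1 j
    then Sum.inl ⟨p.1, p.2.1, h, p.2.2⟩
    else Sum.inr ⟨p.1, p.2.1, by push_neg at h; exact h, p.2.2⟩
  invFun x := Sum.elim (fun p => ⟨p.1, p.2.1, p.2.2.2⟩) (fun p => ⟨p.1, p.2.1, p.2.2.2⟩) x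
  left_inv p := by
    dsimp only
    split_ifs with h <;> rfl
  right_inv x := by
    rcases x with ⟨p, hp1, hp2, hp3⟩ | ⟨p, hp1, hp2, hp3⟩
    · have : ∀ j, p.2 j ≤ p.1 j := hp2
      simp only [Sum.elim_inl]
      exact dif_pos this
    · have : ¬ ∀ j, p.2 j ≤ p.1 j := by
        push_neg
        exact hp2
      simp only [Sum.elim_inr]
      exact dif_neg this

instance NestedT.finite (a k : ℕ) : Finite (NestedT a k) := by
  classical
  exact Finite.of_injective (fun p : NestedT a k =>
    ((splitEquiv a k).symm (Sum.inl p)))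
    (fun x y h => by simpa using congrArg (splitEquiv a k) h)

instance ViolT.finite (a k : ℕ) : Finite (ViolT a k) := by
  classical
  exact Finite.of_injective (fun p : ViolT a k =>
    ((splitEquiv a k).symm (Sum.inr p)))
    (fun x y h => by simpa using congrArg (splitEquiv a k) h)

lemma Qc_split (a k : ℕ) : Qc a a k = Nc a k + Vc a k := by
  classical
  rw [Qc, Nat.card_congr (splitEquiv a k), Nat.card_sum]; rfl

lemma Vc_zero (a : ℕ) : Vc a 0 = 0 := by
  have : IsEmpty (ViolT a 0) := by
    constructor
    rintro ⟨⟨p, q⟩, ⟨⟨hp, hp0⟩, ⟨hq, hq0⟩⟩, ⟨j, hj⟩, hsum⟩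
    dsimp only at hj hsum
    have h1 : ∑ j ∈ Finset.range a, q j = 0 := by omega
    have h2 : q j = 0 := by
      by_cases hja : j < a
      · exact Finset.sum_eq_zero_iff.1 h1 j (Finset.mem_range.2 hja)
      · exact hq0 j (by omega)
    omega
  rw [Vc, Nat.card_of_isEmpty]

lemma sum_sub_one (s : Finset ℕ) (f : ℕ → ℕ) (h : ∀ j ∈ s, 1 ≤ f j) :
    ∑ j ∈ s, (f j - 1) + s.card = ∑ j ∈ s, f j := by
  rw [Finset.card_eq_sum_ones, ← Finset.sum_add_distrib]
  exact Finset.sum_congr rfl (fun j hj => by have := h j hj; omega)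

lemma sum_shift (f : ℕ → ℕ) (m n : ℕ) :
    ∑ j ∈ Finset.Ico (m+1) (n+1), f (j-1) = ∑ j ∈ Finset.Ico m n, f j := by
  rw [Finset.sum_Ico_eq_sum_range, Finset.sum_Ico_eq_sum_range]
  have h : n + 1 - (m + 1) = n - m := by omega
  rw [h]
  exact Finset.sum_congr rfl (fun t _ => by congr 1; omega)

lemma sum_shift' (f : ℕ → ℕ) (m n : ℕ) :
    ∑ j ∈ Finset.Ico m n, f (j+1) = ∑ j ∈ Finset.Ico (m+1) (n+1), f j := by
  rw [Finset.sum_Ico_eq_sum_range, Finset.sum_Ico_eq_sum_range]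
  have h : n + 1 - (m + 1) = n - m := by omega
  rw [h]
  exact Finset.sum_congr rfl (fun t _ => by congr 1; omega)

lemma sum_split (f : ℕ → ℕ) (m n : ℕ) (h : m ≤ n) :
    ∑ j ∈ Finset.range n, f j = ∑ j ∈ Finset.range m, f j + ∑ j ∈ Finset.Ico m n, f j := by
  rw [Finset.range_eq_Ico, Finset.range_eq_Ico]
  exact (Finset.sum_Ico_consecutive f (Nat.zero_le m) h).symm

def fwdA (i : ℕ) (p q : ℕ → ℕ) : ℕ → ℕ := fun j => if j ≤ i then q j - 1 else p (j-1)
def fwdB (i : ℕ) (p q : ℕ → ℕ) : ℕ → ℕ := fun j => if j < i then p j + 1 else q (j+1)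
def bwdQ (i : ℕ) (α β : ℕ → ℕ) : ℕ → ℕ := fun j => if j ≤ i then α j + 1 else β (j-1)
def bwdP (i : ℕ) (α β : ℕ → ℕ) : ℕ → ℕ := fun j => if j < i then β j - 1 else α (j+1)

section Fwd
variable {b i : ℕ} {p q : ℕ → ℕ}

lemma fwdA_isPart (hpm : Antitone p) (hpv : ∀ j, b+1 ≤ j → p j = 0)
    (hqm : Antitone q) (hi : p i < q i) (hia : i < b+1) :
    IsPartFun (b+2) (fwdA i p q) := by
  constructor
  · intro j1 j2 h
    simp only [fwdA]
    by_cases h2 : j2 ≤ i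
    · rw [if_pos h2, if_pos (le_trans h h2)]
      have := hqm (le_trans h h2) -- dummy
      exact Nat.sub_le_sub_right (hqm h) 1
    · rw [if_neg h2]
      by_cases h1 : j1 ≤ i
      · rw [if_pos h1]
        have e1 : p (j2-1) ≤ p i := hpm (by omega)
        have e3 : q i ≤ q j1 := hqm h1
        omega
      · rw [if_neg h1]
        exact hpm (by omega)
  · intro j hj
    simp only [fwdA]
    rw [if_neg (by omega)]
    exact hpv _ (by omega)

lemma fwdB_isPart (hpm : Antitone p) (hqm : Antitone q) (hqv : ∀ j, b+1 ≤ j → q j = 0)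
    (hmin' : ∀ j < i, q j ≤ p j) (hia : i < b+1) :
    IsPartFun b (fwdB i p q) := by
  constructor
  · intro j1 j2 h
    simp only [fwdB]
    by_cases h2 : j2 < i
    · rw [if_pos h2, if_pos (lt_of_le_of_lt h h2)]
      exact Nat.add_le_add_right (hpm h) 1
    · rw [if_neg h2]
      by_cases h1 : j1 < i
      · rw [if_pos h1]
        have e1 : q (j2+1) ≤ q j1 := hqm (by omega)
        have e2 := hmin' j1 h1
        omega
      · rw [if_neg h1]
        exact hqm (by omega)
  · intro j hj
    simp only [fwdB]
    rw [if_neg (by omega)]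
    exact hqv _ (by omega)

lemma fwd_sum (hia : i < b + 1)
    (hpv : ∀ j, b+1 ≤ j → p j = 0) (hqv : ∀ j, b+1 ≤ j → q j = 0)
    (hq1 : ∀ j ≤ i, 1 ≤ q j) :
    ∑ j ∈ Finset.range (b+2), fwdA i p q j + ∑ j ∈ Finset.range b, fwdB i p q j + 1
      = ∑ j ∈ Finset.range (b+1), p j + ∑ j ∈ Finset.range (b+1), q j := by
  have hA : ∑ j ∈ Finset.range (b+2), fwdA i p q j
      = ∑ j ∈ Finset.range (i+1), fwdA i p q j + ∑ j ∈ Finset.Ico (i+1) (b+2), fwdA i p q j :=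
    sum_split _ _ _ (by omega)
  have hA1 : ∑ j ∈ Finset.range (i+1), fwdA i p q j = ∑ j ∈ Finset.range (i+1), (q j - 1) :=
    Finset.sum_congr rfl (fun j hj => by
      simp only [fwdA]; rw [if_pos (by simp only [Finset.mem_range] at hj; omega)])
  have hA1' : ∑ j ∈ Finset.range (i+1), (q j - 1) + (i+1) = ∑ j ∈ Finset.range (i+1), q j := by
    have := sum_sub_one (Finset.range (i+1)) q
      (fun j hj => hq1 j (by simp only [Finset.mem_range] at hj; omega))
    simpa using this
  have hA2 : ∑ j ∈ Finset.Ico (i+1) (b+2), fwdA i p q j = ∑ j ∈ Finset.Ico i (b+1), p j := by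
    rw [← sum_shift p i (b+1)]
    exact Finset.sum_congr rfl (fun j hj => by
      simp only [Finset.mem_Ico] at hj
      simp only [fwdA]; rw [if_neg (by omega)])
  have hB : ∑ j ∈ Finset.range b, fwdB i p q j
      = ∑ j ∈ Finset.range i, fwdB i p q j + ∑ j ∈ Finset.Ico i b, fwdB i p q j :=
    sum_split _ _ _ (by omega)
  have hB1 : ∑ j ∈ Finset.range i, fwdB i p q j = ∑ j ∈ Finset.range i, p j + i := by
    have e : ∑ j ∈ Finset.range i, fwdB i p q j = ∑ j ∈ Finset.range i, (p j + 1) :=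
      Finset.sum_congr rfl (fun j hj => by
        simp only [fwdB]; rw [if_pos (by simp only [Finset.mem_range] at hj; omega)])
    rw [e, Finset.sum_add_distrib]
    simp
  have hB2 : ∑ j ∈ Finset.Ico i b, fwdB i p q j = ∑ j ∈ Finset.Ico (i+1) (b+1), q j := by
    rw [← sum_shift' q i b]
    exact Finset.sum_congr rfl (fun j hj => by
      simp only [Finset.mem_Ico] at hj
      simp only [fwdB]; rw [if_neg (by omega)])
  have hp : ∑ j ∈ Finset.range (b+1), p j
      = ∑ j ∈ Finset.range i, p j + ∑ j ∈ Finset.Ico i (b+1), p j := sum_split _ _ _ (by omega)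
  have hq : ∑ j ∈ Finset.range (b+1), q j
      = ∑ j ∈ Finset.range (i+1), q j + ∑ j ∈ Finset.Ico (i+1) (b+1), q j :=
    sum_split _ _ _ (by omega)
  omega

end Fwd

section Bwd
variable {b i : ℕ} {α β : ℕ → ℕ}

lemma bwdQ_isPart (hαm : Antitone α) (hβm : Antitone β) (hβv : ∀ j, b ≤ j → β j = 0)
    (hC : β i ≤ α i + 1) (hib : i ≤ b) :
    IsPartFun (b+1) (bwdQ i α β) := by
  constructor
  · intro j1 j2 h
    simp only [bwdQ]
    by_cases h2 : j2 ≤ i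
    · rw [if_pos h2, if_pos (le_trans h h2)]
      exact Nat.add_le_add_right (hαm h) 1
    · rw [if_neg h2]
      by_cases h1 : j1 ≤ i
      · rw [if_pos h1]
        have e1 : β (j2-1) ≤ β i := hβm (by omega)
        have e2 : α i ≤ α j1 := hαm h1
        omega
      · rw [if_neg h1]
        exact hβm (by omega)
  · intro j hj
    simp only [bwdQ]
    rw [if_neg (by omega)]
    exact hβv _ (by omega)

lemma bwdP_isPart (hαm : Antitone α) (hαv : ∀ j, b+2 ≤ j → α j = 0) (hβm : Antitone β)
    (hmin2 : ∀ j < i, α j + 2 ≤ β j) (hib : i ≤ b) :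
    IsPartFun (b+1) (bwdP i α β) := by
  constructor
  · intro j1 j2 h
    simp only [bwdP]
    by_cases h2 : j2 < i
    · rw [if_pos h2, if_pos (lt_of_le_of_lt h h2)]
      exact Nat.sub_le_sub_right (hβm h) 1
    · rw [if_neg h2]
      by_cases h1 : j1 < i
      · rw [if_pos h1]
        have e1 : α (j2+1) ≤ α (j1+1) := hαm (by omega)
        have e2 : α (j1+1) ≤ α j1 := hαm (by omega)
        have e3 := hmin2 j1 h1
        omega
      · rw [if_neg h1]
        exact hαm (by omega)
  · intro j hj
    simp only [bwdP]
    rw [if_neg (by omega)]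
    exact hαv _ (by omega)

lemma bwd_sum (hib : i ≤ b) (hβ2 : ∀ j < i, 2 ≤ β j) :
    ∑ j ∈ Finset.range (b+1), bwdP i α β j + ∑ j ∈ Finset.range (b+1), bwdQ i α β j
      = ∑ j ∈ Finset.range (b+2), α j + ∑ j ∈ Finset.range b, β j + 1 := by
  have hP : ∑ j ∈ Finset.range (b+1), bwdP i α β j
      = ∑ j ∈ Finset.range i, bwdP i α β j + ∑ j ∈ Finset.Ico i (b+1), bwdP i α β j :=
    sum_split _ _ _ (by omega)
  have hP1 : ∑ j ∈ Finset.range i, bwdP i α β j = ∑ j ∈ Finset.range i, (β j - 1) :=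
    Finset.sum_congr rfl (fun j hj => by
      simp only [bwdP]; rw [if_pos (by simp only [Finset.mem_range] at hj; omega)])
  have hP1' : ∑ j ∈ Finset.range i, (β j - 1) + i = ∑ j ∈ Finset.range i, β j := by
    have := sum_sub_one (Finset.range i) β
      (fun j hj => by have := hβ2 j (by simpa using hj); omega)
    simpa using this
  have hP2 : ∑ j ∈ Finset.Ico i (b+1), bwdP i α β j = ∑ j ∈ Finset.Ico (i+1) (b+2), α j := by
    rw [← sum_shift' α i (b+1)]
    exact Finset.sum_congr rfl (fun j hj => by
      simp only [Finset.mem_Ico] at hj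
      simp only [bwdP]; rw [if_neg (by omega)])
  have hQ : ∑ j ∈ Finset.range (b+1), bwdQ i α β j
      = ∑ j ∈ Finset.range (i+1), bwdQ i α β j + ∑ j ∈ Finset.Ico (i+1) (b+1), bwdQ i α β j :=
    sum_split _ _ _ (by omega)
  have hQ1 : ∑ j ∈ Finset.range (i+1), bwdQ i α β j = ∑ j ∈ Finset.range (i+1), α j + (i+1) := by
    have e : ∑ j ∈ Finset.range (i+1), bwdQ i α β j = ∑ j ∈ Finset.range (i+1), (α j + 1) :=
      Finset.sum_congr rfl (fun j hj => by
        simp only [bwdQ]; rw [if_pos (by simp only [Finset.mem_range] at hj; omega)])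
    rw [e, Finset.sum_add_distrib]
    simp
  have hQ2 : ∑ j ∈ Finset.Ico (i+1) (b+1), bwdQ i α β j = ∑ j ∈ Finset.Ico i b, β j := by
    rw [← sum_shift β i b]
    exact Finset.sum_congr rfl (fun j hj => by
      simp only [Finset.mem_Ico] at hj
      simp only [bwdQ]; rw [if_neg (by omega)])
  have hα : ∑ j ∈ Finset.range (b+2), α j
      = ∑ j ∈ Finset.range (i+1), α j + ∑ j ∈ Finset.Ico (i+1) (b+2), α j :=
    sum_split _ _ _ (by omega)
  have hβ : ∑ j ∈ Finset.range b, β j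
      = ∑ j ∈ Finset.range i, β j + ∑ j ∈ Finset.Ico i b, β j := sum_split _ _ _ (by omega)
  omega

end Bwd

section RoundTrip
variable {i : ℕ} {p q α β : ℕ → ℕ}

lemma bwd_fwd_P (hq1 : ∀ j ≤ i, 1 ≤ q j) : bwdP i (fwdA i p q) (fwdB i p q) = p := by
  funext j
  simp only [bwdP, fwdA, fwdB]
  by_cases h : j < i
  · rw [if_pos h, if_pos h]
    omega
  · rw [if_neg h, if_neg (by omega : ¬ j + 1 ≤ i)]
    simp

lemma bwd_fwd_Q (hq1 : ∀ j ≤ i, 1 ≤ q j) : bwdQ i (fwdA i p q) (fwdB i p q) = q := by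
  funext j
  simp only [bwdQ, fwdA, fwdB]
  by_cases h : j ≤ i
  · rw [if_pos h, if_pos h]
    have := hq1 j h
    omega
  · rw [if_neg h, if_neg (by omega : ¬ j - 1 < i)]
    congr 1
    omega

lemma fwd_bwd_A : fwdA i (bwdP i α β) (bwdQ i α β) = α := by
  funext j
  simp only [fwdA, bwdP, bwdQ]
  by_cases h : j ≤ i
  · rw [if_pos h, if_pos h]
    omega
  · rw [if_neg h, if_neg (by omega : ¬ j - 1 < i)]
    congr 1
    omega

lemma fwd_bwd_B (hβ2 : ∀ j < i, 2 ≤ β j) : fwdB i (bwdP i α β) (bwdQ i α β) = β := by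
  funext j
  simp only [fwdB, bwdP, bwdQ]
  by_cases h : j < i
  · rw [if_pos h, if_pos h]
    have := hβ2 j h
    omega
  · rw [if_neg h, if_neg (by omega : ¬ j + 1 ≤ i)]
    simp

lemma fwd_sent_find (hqm : Antitone q) (hq1 : ∀ j ≤ i, 1 ≤ q j) (hmin' : ∀ j < i, q j ≤ p j)
    (hs : ∃ j, fwdB i p q j ≤ fwdA i p q j + 1) : Nat.find hs = i := by
  rw [Nat.find_eq_iff]
  constructor
  · simp only [fwdA, fwdB]
    rw [if_neg (lt_irrefl i), if_pos le_rfl]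
    have e1 := hq1 i le_rfl
    have e2 : q (i+1) ≤ q i := hqm (Nat.le_succ i)
    omega
  · intro j hj
    simp only [fwdA, fwdB]
    rw [if_pos hj, if_pos (le_of_lt hj)]
    have e1 := hq1 j (le_of_lt hj)
    have e2 := hmin' j hj
    omega

lemma bwd_viol_find (hαm : Antitone α) (hC : β i ≤ α i + 1) (hmin2 : ∀ j < i, α j + 2 ≤ β j)
    (hv : ∃ j, bwdP i α β j < bwdQ i α β j) : Nat.find hv = i := by
  rw [Nat.find_eq_iff]
  constructor
  · simp only [bwdP, bwdQ]
    rw [if_neg (lt_irrefl i), if_pos le_rfl]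
    have e : α (i+1) ≤ α i := hαm (Nat.le_succ i)
    omega
  · intro j hj
    simp only [bwdP, bwdQ]
    rw [if_pos hj, if_pos (le_of_lt hj)]
    have := hmin2 j hj
    omega

end RoundTrip

lemma invSent {b k' : ℕ} (y : PairT (b+2) b k') : ∃ j, y.1.2 j ≤ y.1.1 j + 1 :=
  ⟨b, by rw [y.2.1.2.2 b le_rfl]; omega⟩

noncomputable def reflEquiv (b k : ℕ) (hk : 1 ≤ k) : ViolT (b+1) k ≃ PairT (b+2) b (k-1) where
  toFun x :=
    ⟨(fwdA (Nat.find x.2.2.1) x.1.1 x.1.2, fwdB (Nat.find x.2.2.1) x.1.1 x.1.2), by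
      obtain ⟨pq, ⟨hp, hq⟩, hex, hsum⟩ := x
      dsimp only
      have hpm : Antitone pq.1 := hp.1
      have hpv : ∀ j, b+1 ≤ j → pq.1 j = 0 := hp.2
      have hqm : Antitone pq.2 := hq.1
      have hqv : ∀ j, b+1 ≤ j → pq.2 j = 0 := hq.2
      have hi : pq.1 (Nat.find hex) < pq.2 (Nat.find hex) := Nat.find_spec hex
      have hmin' : ∀ j < Nat.find hex, pq.2 j ≤ pq.1 j := fun j hj => by
        have : ¬ (pq.1 j < pq.2 j) := Nat.find_min hex hj
        omega
      have hia : Nat.find hex < b + 1 := by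
        by_contra h
        push_neg at h
        have e1 := hpv _ h
        have e2 := hqv _ h
        omega
      have hq1 : ∀ j ≤ Nat.find hex, 1 ≤ pq.2 j := fun j hj => by
        have := hqm hj; omega
      refine ⟨⟨fwdA_isPart hpm hpv hqm hi hia, fwdB_isPart hpm hqm hqv hmin' hia⟩, ?_⟩
      have := fwd_sum hia hpv hqv hq1
      omega⟩
  invFun y :=
    ⟨(bwdP (Nat.find (invSent y)) y.1.1 y.1.2, bwdQ (Nat.find (invSent y)) y.1.1 y.1.2), by
      have hαm : Antitone y.1.1 := y.2.1.1.1
      have hαv : ∀ j, b+2 ≤ j → y.1.1 j = 0 := y.2.1.1.2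
      have hβm : Antitone y.1.2 := y.2.1.2.1
      have hβv : ∀ j, b ≤ j → y.1.2 j = 0 := y.2.1.2.2
      have hsum := y.2.2
      dsimp only
      have hC : y.1.2 (Nat.find (invSent y)) ≤ y.1.1 (Nat.find (invSent y)) + 1 :=
        Nat.find_spec (invSent y)
      have hmin2 : ∀ j < Nat.find (invSent y), y.1.1 j + 2 ≤ y.1.2 j := fun j hj => by
        have : ¬ (y.1.2 j ≤ y.1.1 j + 1) := Nat.find_min (invSent y) hj
        omega
      have hib : Nat.find (invSent y) ≤ b :=
        Nat.find_le (by rw [hβv b le_rfl]; omega)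
      refine ⟨⟨bwdP_isPart hαm hαv hβm hmin2 hib, bwdQ_isPart hαm hβm hβv hC hib⟩, ?_, ?_⟩
      · refine ⟨Nat.find (invSent y), ?_⟩
        simp only [bwdP, bwdQ]
        rw [if_neg (lt_irrefl _), if_pos le_rfl]
        have e : y.1.1 (Nat.find (invSent y) + 1) ≤ y.1.1 (Nat.find (invSent y)) :=
          hαm (Nat.le_succ _)
        omega
      · have hβ2 : ∀ j < Nat.find (invSent y), 2 ≤ y.1.2 j := fun j hj => by
          have := hmin2 j hj; omega
        have := bwd_sum (α := y.1.1) (β := y.1.2) hib hβ2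
        omega⟩
  left_inv x := by
    obtain ⟨pq, ⟨hp, hq⟩, hex, hsum⟩ := x
    apply Subtype.ext
    dsimp only
    have hqm : Antitone pq.2 := hq.1
    have hi : pq.1 (Nat.find hex) < pq.2 (Nat.find hex) := Nat.find_spec hex
    have hmin' : ∀ j < Nat.find hex, pq.2 j ≤ pq.1 j := fun j hj => by
      have : ¬ (pq.1 j < pq.2 j) := Nat.find_min hex hj
      omega
    have hq1 : ∀ j ≤ Nat.find hex, 1 ≤ pq.2 j := fun j hj => by
      have := hqm hj; omega
    rw [fwd_sent_find hqm hq1 hmin']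
    rw [bwd_fwd_P hq1, bwd_fwd_Q hq1]
  right_inv y := by
    apply Subtype.ext
    dsimp only
    have hαm : Antitone y.1.1 := y.2.1.1.1
    have hC : y.1.2 (Nat.find (invSent y)) ≤ y.1.1 (Nat.find (invSent y)) + 1 :=
      Nat.find_spec (invSent y)
    have hmin2 : ∀ j < Nat.find (invSent y), y.1.1 j + 2 ≤ y.1.2 j := fun j hj => by
      have : ¬ (y.1.2 j ≤ y.1.1 j + 1) := Nat.find_min (invSent y) hj
      omega
    have hβ2 : ∀ j < Nat.find (invSent y), 2 ≤ y.1.2 j := fun j hj => by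
      have := hmin2 j hj; omega
    rw [bwd_viol_find hαm hC hmin2]
    rw [fwd_bwd_A, fwd_bwd_B hβ2]

def ppEquiv (a k : ℕ) :
    {f : Fin 2 → Fin a → ℕ //
      (∀ i : Fin 2, ∀ j j' : Fin a, j ≤ j' → f i j' ≤ f i j) ∧
      (∀ j : Fin a, f 1 j ≤ f 0 j) ∧
      ∑ i, ∑ j, f i j = k} ≃ NestedT a k where
  toFun f :=
    ⟨(fun j => if h : j < a then f.1 0 ⟨j, h⟩ else 0,
      fun j => if h : j < a then f.1 1 ⟨j, h⟩ else 0), by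
      have hrow : ∀ i : Fin 2, IsPartFun a (fun j => if h : j < a then f.1 i ⟨j, h⟩ else 0) := by
        intro i
        constructor
        · intro j1 j2 h
          dsimp only
          by_cases h2 : j2 < a
          · rw [dif_pos h2, dif_pos (by omega)]
            exact f.2.1 i ⟨j1, by omega⟩ ⟨j2, h2⟩ h
          · rw [dif_neg h2]
            exact Nat.zero_le _
        · intro j hj
          dsimp only
          rw [dif_neg (by omega)]
      have hsum : ∀ i : Fin 2, ∑ j ∈ Finset.range a, (fun j => if h : j < a then f.1 i ⟨j, h⟩ else 0) j
          = ∑ j : Fin a, f.1 i j := by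
        intro i
        rw [← Fin.sum_univ_eq_sum_range]
        exact Finset.sum_congr rfl (fun j _ => by simp)
      refine ⟨⟨hrow 0, hrow 1⟩, ?_, ?_⟩
      · intro j
        dsimp only
        by_cases h : j < a
        · rw [dif_pos h, dif_pos h]
          exact f.2.2.1 ⟨j, h⟩
        · rw [dif_neg h]
          exact Nat.zero_le _
      · rw [hsum 0, hsum 1, ← Fin.sum_univ_two (f := fun i => ∑ j : Fin a, f.1 i j)]
        exact f.2.2.2⟩
  invFun p :=
    ⟨fun i j => if i.val = 0 then p.1.1 j.val else p.1.2 j.val, by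
      refine ⟨?_, ?_, ?_⟩
      · intro i j j' hjj
        dsimp only
        by_cases h : i.val = 0
        · rw [if_pos h, if_pos h]
          exact p.2.1.1.1 hjj
        · rw [if_neg h, if_neg h]
          exact p.2.1.2.1 hjj
      · intro j
        dsimp only
        simp only [Fin.val_zero, Fin.val_one]
        norm_num
        exact p.2.2.1 j.val
      · rw [Fin.sum_univ_two]
        dsimp only
        simp only [Fin.val_zero, Fin.val_one]
        norm_num
        rw [Fin.sum_univ_eq_sum_range (fun j => p.1.1 j), Fin.sum_univ_eq_sum_range (fun j => p.1.2 j)]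
        exact p.2.2.2⟩
  left_inv f := by
    apply Subtype.ext
    funext i j
    dsimp only
    by_cases h : i.val = 0
    · rw [if_pos h, dif_pos j.2]
      have : i = 0 := by omega
      subst this
      rfl
    · rw [if_neg h, dif_pos j.2]
      have : i = 1 := by omega
      subst this
      rfl
  right_inv p := by
    apply Subtype.ext
    apply Prod.ext
    · funext j
      dsimp only
      by_cases h : j < a
      · rw [dif_pos h]
        simp only [Fin.val_zero]
        norm_num
      · rw [dif_neg h, (p.2.1.1.2 j (by omega)).symm]
    · funext j
      dsimp only
      by_cases h : j < a
      · rw [dif_pos h]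
        simp only [Fin.val_one]
        norm_num
      · rw [dif_neg h, (p.2.1.2.2 j (by omega)).symm]

lemma Vc_eq (b k : ℕ) (hk : 1 ≤ k) : Vc (b+1) k = Qc (b+2) b (k-1) :=
  Nat.card_congr (reflEquiv b k hk)

lemma mk_Nc (b : ℕ) :
    (PowerSeries.mk fun k => (Nc (b+1) k : ℚ)) =
      (PowerSeries.mk fun k => (Pc (b+1) k : ℚ)) * (PowerSeries.mk fun k => (Pc (b+1) k : ℚ))
      - X * ((PowerSeries.mk fun k => (Pc (b+2) k : ℚ)) * (PowerSeries.mk fun k => (Pc b k : ℚ))) := by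
  rw [← mk_Qc (b+1) (b+1), ← mk_Qc (b+2) b]
  ext k
  rw [map_sub, coeff_mk]
  have hX : (X : ℚ⟦X⟧) * (PowerSeries.mk fun k => (Qc (b+2) b k : ℚ))
      = (PowerSeries.mk fun k => (Qc (b+2) b k : ℚ)) * X^1 := by rw [pow_one, mul_comm]
  rw [hX, coeff_mul_X_pow', coeff_mk]
  have hs := Qc_split (b+1) k
  by_cases hk : 1 ≤ k
  · rw [if_pos hk, coeff_mk]
    have hv := Vc_eq b k hk
    push_cast [hs, hv]
    ring
  · have hk0 : k = 0 := by omega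
    subst hk0
    rw [if_neg (by omega)]
    have hv := Vc_zero (b+1)
    push_cast [hs, hv]
    ring

theorem planePartition_genFun (a : ℕ) (ha : 1 ≤ a) :
    (PowerSeries.mk fun k => (planePartitionCount a k : ℚ)) *
      ((1 - X) * (∏ j ∈ Finset.Icc 2 a, (1 - X ^ j) ^ 2) * (1 - X ^ (a + 1))) = 1 := by
  obtain ⟨b, rfl⟩ : ∃ b, a = b + 1 := ⟨a - 1, by omega⟩
  classical
  have hcount : ∀ k, planePartitionCount (b+1) k = Nc (b+1) k := fun k =>
    Nat.card_congr (ppEquiv (b+1) k)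
  have hmk : (PowerSeries.mk fun k => (planePartitionCount (b+1) k : ℚ))
      = PowerSeries.mk fun k => (Nc (b+1) k : ℚ) := by
    ext k
    rw [coeff_mk, coeff_mk, hcount k]
  rw [hmk]
  have e1 : (PowerSeries.mk fun k => (Pc (b+1) k : ℚ)) * ∏ j ∈ Finset.Icc 1 (b+1), (1 - X^j) = 1 :=
    mkPc_prod (b+1)
  have e2 : (PowerSeries.mk fun k => (Pc (b+2) k : ℚ)) * ∏ j ∈ Finset.Icc 1 (b+2), (1 - X^j) = 1 :=
    mkPc_prod (b+2)
  have e3 : (PowerSeries.mk fun k => (Pc b k : ℚ)) * ∏ j ∈ Finset.Icc 1 b, (1 - X^j) = 1 :=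
    mkPc_prod b
  have hI2 : ∏ j ∈ Finset.Icc 1 (b+2), (1 - (X:ℚ⟦X⟧)^j)
      = (∏ j ∈ Finset.Icc 1 (b+1), (1 - X^j)) * (1 - X^(b+2)) := by
    have h : Finset.Icc 1 (b+2) = insert (b+2) (Finset.Icc 1 (b+1)) := by
      ext x; simp [Finset.mem_Icc, Finset.mem_insert]; omega
    rw [h, Finset.prod_insert (by simp)]
    ring
  have hI1 : ∏ j ∈ Finset.Icc 1 (b+1), (1 - (X:ℚ⟦X⟧)^j)
      = (∏ j ∈ Finset.Icc 1 b, (1 - X^j)) * (1 - X^(b+1)) := by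
    have h : Finset.Icc 1 (b+1) = insert (b+1) (Finset.Icc 1 b) := by
      ext x; simp [Finset.mem_Icc, Finset.mem_insert]; omega
    rw [h, Finset.prod_insert (by simp)]
    ring
  have hIs : ∏ j ∈ Finset.Icc 1 (b+1), (1 - (X:ℚ⟦X⟧)^j)
      = (1 - X) * ∏ j ∈ Finset.Icc 2 (b+1), (1 - X^j) := by
    have h : Finset.Icc 1 (b+1) = insert 1 (Finset.Icc 2 (b+1)) := by
      ext x; simp [Finset.mem_Icc, Finset.mem_insert]; omega
    rw [h, Finset.prod_insert (by simp), pow_one]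
  have hD : (1 - X) * ((1 - X) * (∏ j ∈ Finset.Icc 2 (b+1), (1 - (X:ℚ⟦X⟧)^j)^2) * (1 - X^(b+1+1)))
      = (∏ j ∈ Finset.Icc 1 (b+1), (1 - X^j)) * ∏ j ∈ Finset.Icc 1 (b+2), (1 - X^j) := by
    rw [Finset.prod_pow, hI2, hIs]
    ring
  have c1 : (PowerSeries.mk fun k => (Pc (b+1) k : ℚ)) * ∏ j ∈ Finset.Icc 1 (b+2), (1 - X^j)
      = 1 - X^(b+2) := by
    rw [hI2, ← mul_assoc, e1, one_mul]
  have c2 : (PowerSeries.mk fun k => (Pc b k : ℚ)) * ∏ j ∈ Finset.Icc 1 (b+1), (1 - X^j)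
      = 1 - X^(b+1) := by
    rw [hI1, ← mul_assoc, e3, one_mul]
  have hMain : (PowerSeries.mk fun k => (Nc (b+1) k : ℚ)) *
      ((∏ j ∈ Finset.Icc 1 (b+1), (1 - X^j)) * ∏ j ∈ Finset.Icc 1 (b+2), (1 - X^j)) = 1 - X := by
    rw [mk_Nc b]
    calc ((PowerSeries.mk fun k => (Pc (b+1) k : ℚ)) * (PowerSeries.mk fun k => (Pc (b+1) k : ℚ))
          - X * ((PowerSeries.mk fun k => (Pc (b+2) k : ℚ)) * (PowerSeries.mk fun k => (Pc b k : ℚ)))) *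
          ((∏ j ∈ Finset.Icc 1 (b+1), (1 - X^j)) * ∏ j ∈ Finset.Icc 1 (b+2), (1 - X^j))
        = ((PowerSeries.mk fun k => (Pc (b+1) k : ℚ)) * ∏ j ∈ Finset.Icc 1 (b+1), (1 - X^j)) *
            ((PowerSeries.mk fun k => (Pc (b+1) k : ℚ)) * ∏ j ∈ Finset.Icc 1 (b+2), (1 - X^j))
          - X * (((PowerSeries.mk fun k => (Pc (b+2) k : ℚ)) * ∏ j ∈ Finset.Icc 1 (b+2), (1 - X^j)) *
            ((PowerSeries.mk fun k => (Pc b k : ℚ)) * ∏ j ∈ Finset.Icc 1 (b+1), (1 - X^j))) := by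
          ring
      _ = 1 * (1 - X^(b+2)) - X * (1 * (1 - X^(b+1))) := by rw [e1, c1, e2, c2]
      _ = 1 - X := by ring
  have hunit : (1 - X : ℚ⟦X⟧) ≠ 0 := fun h => by
    have := congrArg constantCoeff h
    simp at this
  apply mul_left_cancel₀ hunit
  calc (1 - X) * ((PowerSeries.mk fun k => (Nc (b+1) k : ℚ)) *
        ((1 - X) * (∏ j ∈ Finset.Icc 2 (b+1), (1 - X^j)^2) * (1 - X^(b+1+1))))
      = (PowerSeries.mk fun k => (Nc (b+1) k : ℚ)) *
        ((1 - X) * ((1 - X) * (∏ j ∈ Finset.Icc 2 (b+1), (1 - X^j)^2) * (1 - X^(b+1+1)))) := by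
        ring
    _ = (PowerSeries.mk fun k => (Nc (b+1) k : ℚ)) *
        ((∏ j ∈ Finset.Icc 1 (b+1), (1 - X^j)) * ∏ j ∈ Finset.Icc 1 (b+2), (1 - X^j)) := by
        rw [hD]
    _ = 1 - X := hMain
    _ = (1 - X) * 1 := by ring

end PPaux
end
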